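/- arXiv:2106.05930 — 5 statements merged into one kernel-verified Lean document; each statement's English description precedes it below -/
import Mathlib

section
/- Let G and H be finite simple graphs, each with more than one vertex, and suppose both have a spherical dimension. If there exist a unit-distance embedding of G in ℝ^{sdim G} whose image lies on a sphere of radius r₁ with 0 < r₁ < 1 and a unit-distance embedding of H in ℝ^{sdim H} whose image lies on a sphere of radius r₂ with 0 < r₂ < 1 such that r₁² + r₂² = 1, then dim(G + H) = sdim G + sdim H. If no such pair of embeddings exists, then dim(G + H) > sdim G + sdim H. -/
/-- A unit-distance embedding of a simple graph `G` in `ℝⁿ`: an injective map sending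
adjacent vertices to points at distance 1, such that no other vertex lies on the
closed segment between the endpoints of an edge. -/
def IsUDEmbedding {V : Type*} (G : SimpleGraph V) {n : ℕ}
    (f : V → EuclideanSpace ℝ (Fin n)) : Prop :=
  Function.Injective f ∧
  (∀ ⦃u v⦄, G.Adj u v → dist (f u) (f v) = 1) ∧
  (∀ ⦃u v⦄, G.Adj u v → ∀ w, w ≠ u → w ≠ v → f w ∉ segment ℝ (f u) (f v))

/-- `G` has a unit-distance embedding in `ℝⁿ`. -/
def HasUDEmbedding {V : Type*} (G : SimpleGraph V) (n : ℕ) : Prop :=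
  ∃ f : V → EuclideanSpace ℝ (Fin n), IsUDEmbedding G f

/-- `G` has a unit-distance embedding in `ℝⁿ` whose image lies on a sphere of radius `r`. -/
def HasSphericalEmbeddingRadius {V : Type*} (G : SimpleGraph V) (n : ℕ) (r : ℝ) : Prop :=
  ∃ f : V → EuclideanSpace ℝ (Fin n), IsUDEmbedding G f ∧
    ∃ c : EuclideanSpace ℝ (Fin n), ∀ v, dist (f v) c = r

/-- `G` has a unit-distance embedding in `ℝⁿ` whose image lies on a sphere
of radius `0 < r < 1`. -/
def HasSphericalEmbedding {V : Type*} (G : SimpleGraph V) (n : ℕ) : Prop :=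
  ∃ r : ℝ, 0 < r ∧ r < 1 ∧ HasSphericalEmbeddingRadius G n r

/-- The dimension of a graph: the least `n` such that `G` has a unit-distance
embedding in `ℝⁿ`. -/
noncomputable def graphDim {V : Type*} (G : SimpleGraph V) : ℕ :=
  sInf {n | HasUDEmbedding G n}

/-- The spherical dimension of a graph: the least `n` such that `G` has a unit-distance
embedding in `ℝⁿ` on a sphere of radius strictly between 0 and 1.  By convention the
spherical dimension of a graph with at most one vertex is `0`. -/
noncomputable def sphericalDim {V : Type*} [Fintype V] (G : SimpleGraph V) : ℕ :=
  if Fintype.card V ≤ 1 then 0 else sInf {n | HasSphericalEmbedding G n}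

/-- The join `G + H` of two graphs: disjoint union together with all edges between them. -/
def graphJoin {V W : Type*} (G : SimpleGraph V) (H : SimpleGraph W) :
    SimpleGraph (V ⊕ W) :=
  SimpleGraph.fromRel (fun x y =>
    match x, y with
    | Sum.inl a, Sum.inl b => G.Adj a b
    | Sum.inr a, Sum.inr b => H.Adj a b
    | Sum.inl _, Sum.inr _ => True
    | Sum.inr _, Sum.inl _ => False)

/-- `H` is a minor of `G` (branch-set formulation, equivalent to being obtainable from `G`
by vertex deletions, edge deletions and edge contractions). -/
def IsMinorOf {W V : Type*} (H : SimpleGraph W) (G : SimpleGraph V) : Prop :=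
  ∃ φ : W → Set V,
    (∀ w, (SimpleGraph.induce (φ w) G).Connected) ∧
    (Pairwise fun w w' => Disjoint (φ w) (φ w')) ∧
    (∀ ⦃w w'⦄, H.Adj w w' → ∃ x ∈ φ w, ∃ y ∈ φ w', G.Adj x y)

/-- `H` is a proper minor of `G`: a minor that is not isomorphic to `G`. -/
def IsProperMinorOf {W V : Type*} (H : SimpleGraph W) (G : SimpleGraph V) : Prop :=
  IsMinorOf H G ∧ ¬ Nonempty (H ≃g G)

/-- `G` is minor minimal with respect to dimension `n`. -/
def MinorMinimalDim {V : Type*} (G : SimpleGraph V) (n : ℕ) : Prop :=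
  graphDim G = n ∧
  ∀ (W : Type) [Fintype W] (H : SimpleGraph W), Nonempty W →
    IsProperMinorOf H G → graphDim H < n

/-- `G` is minor minimal with respect to spherical dimension `n`. -/
def MinorMinimalSDim {V : Type*} [Fintype V] (G : SimpleGraph V) (n : ℕ) : Prop :=
  sphericalDim G = n ∧
  ∀ (W : Type) [Fintype W] (H : SimpleGraph W), Nonempty W →
    IsProperMinorOf H G → sphericalDim H < n

/-- The vertex type of the graph `Sₙ`. -/
def SType : ℕ → Type
  | 0 => Fin 0
  | 1 => Fin 1
  | 2 => Fin 2
  | 3 => Fin 3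
  | (n + 4) => Fin (n + 1) ⊕ Fin 3

instance : (n : ℕ) → Fintype (SType n)
  | 0 => inferInstanceAs (Fintype (Fin 0))
  | 1 => inferInstanceAs (Fintype (Fin 1))
  | 2 => inferInstanceAs (Fintype (Fin 2))
  | 3 => inferInstanceAs (Fintype (Fin 3))
  | (n + 4) => inferInstanceAs (Fintype (Fin (n + 1) ⊕ Fin 3))

/-- The graph `Sₙ`:  `S₁ = ε₁`, `S₂ = ε₂`, `S₃ = ε₃`, and `Sₙ = K_{n-3} + ε₃` for `n ≥ 4`. -/
def SGraph : (n : ℕ) → SimpleGraph (SType n)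
  | 0 => ⊥
  | 1 => ⊥
  | 2 => ⊥
  | 3 => ⊥
  | (n + 4) => graphJoin (⊤ : SimpleGraph (Fin (n + 1))) (⊥ : SimpleGraph (Fin 3))


open scoped RealInnerProductSpace
noncomputable def eqv {n : ℕ} : (Fin n → ℝ) ≃ EuclideanSpace ℝ (Fin n) :=
  (WithLp.equiv 2 _).symm

@[simp] lemma eqv_apply {n : ℕ} (x : Fin n → ℝ) (i : Fin n) : (eqv x) i = x i := rfl

lemma dist_append {m k : ℕ} (A B : Fin m → ℝ) (C D : Fin k → ℝ) :
    dist (eqv (Fin.append A C)) (eqv (Fin.append B D)) =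
    Real.sqrt ((∑ i, dist (A i) (B i) ^ 2) + ∑ j, dist (C j) (D j) ^ 2) := by
  rw [EuclideanSpace.dist_eq]
  congr 1
  rw [Fin.sum_univ_add]
  simp [Fin.append_left, Fin.append_right]

lemma euclid_dist_sq {n : ℕ} (x y : EuclideanSpace ℝ (Fin n)) :
    ∑ i, dist (x i) (y i) ^ 2 = dist x y ^ 2 := by
  rw [EuclideanSpace.dist_eq, Real.sq_sqrt]
  positivity


lemma graphJoin_adj_ll {V W : Type*} {G : SimpleGraph V} {H : SimpleGraph W} {a b : V}
    (h : (graphJoin G H).Adj (Sum.inl a) (Sum.inl b)) : G.Adj a b := by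
  rw [graphJoin, SimpleGraph.fromRel_adj] at h
  rcases h.2 with h' | h'
  · exact h'
  · exact h'.symm

lemma graphJoin_adj_rr {V W : Type*} {G : SimpleGraph V} {H : SimpleGraph W} {a b : W}
    (h : (graphJoin G H).Adj (Sum.inr a) (Sum.inr b)) : H.Adj a b := by
  rw [graphJoin, SimpleGraph.fromRel_adj] at h
  rcases h.2 with h' | h'
  · exact h'
  · exact h'.symm

lemma join_construct {V W : Type*} (G : SimpleGraph V) (H : SimpleGraph W) {m k : ℕ}
    {r₁ r₂ : ℝ} (h1 : 0 < r₁) (h2 : 0 < r₂) (hr : r₁ ^ 2 + r₂ ^ 2 = 1)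
    (hG : HasSphericalEmbeddingRadius G m r₁) (hH : HasSphericalEmbeddingRadius H k r₂) :
    HasUDEmbedding (graphJoin G H) (m + k) := by
  obtain ⟨f, ⟨finj, fdist, fseg⟩, c₁, hc₁⟩ := hG
  obtain ⟨g, ⟨ginj, gdist, gseg⟩, c₂, hc₂⟩ := hH
  set x : V → Fin m → ℝ := fun v i => f v i - c₁ i with hxdef
  set y : W → Fin k → ℝ := fun w j => g w j - c₂ j with hydef
  set F : V ⊕ W → EuclideanSpace ℝ (Fin (m + k)) :=
    Sum.elim (fun v => eqv (Fin.append (x v) 0)) (fun w => eqv (Fin.append 0 (y w))) with hF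
  have hxs : ∀ v, ∑ i, x v i ^ 2 = r₁ ^ 2 := by
    intro v
    have := euclid_dist_sq (f v) c₁
    rw [hc₁ v] at this
    simpa [Real.dist_eq, sq_abs] using this
  have hys : ∀ w, ∑ j, y w j ^ 2 = r₂ ^ 2 := by
    intro w
    have := euclid_dist_sq (g w) c₂
    rw [hc₂ w] at this
    simpa [Real.dist_eq, sq_abs] using this
  have hxne : ∀ v, x v ≠ 0 := by
    intro v hv
    have := hxs v
    rw [hv] at this
    simp at this
    nlinarith
  have hyne : ∀ w, y w ≠ 0 := by
    intro w hw
    have := hys w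
    rw [hw] at this
    simp at this
    nlinarith
  have hxinj : Function.Injective x := by
    intro v v' h
    apply finj
    ext i
    have := congrFun h i
    simp only [hxdef] at this
    linarith
  have hyinj : Function.Injective y := by
    intro w w' h
    apply ginj
    ext j
    have := congrFun h j
    simp only [hydef] at this
    linarith
  refine ⟨F, ?_, ?_, ?_⟩
  · -- injectivity
    rintro (v | w) (v' | w') h
    · have h' := eqv.injective h
      have : x v = x v' := by
        ext i
        simpa [Fin.append_left] using congrFun h' (Fin.castAdd k i)
      exact congrArg Sum.inl (hxinj this)
    · exfalso
      apply hxne v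
      ext i
      simpa [Fin.append_left, Fin.append_right] using congrFun (eqv.injective h) (Fin.castAdd k i)
    · exfalso
      apply hxne v'
      ext i
      simpa [Fin.append_left, Fin.append_right] using
        (congrFun (eqv.injective h) (Fin.castAdd k i)).symm
    · have h' := eqv.injective h
      have : y w = y w' := by
        ext j
        simpa [Fin.append_right] using congrFun h' (Fin.natAdd m j)
      exact congrArg Sum.inr (hyinj this)
  · -- distances
    rintro (v | w) (v' | w') huv
    · have hadj := graphJoin_adj_ll huv
      show dist (eqv (Fin.append (x v) 0)) (eqv (Fin.append (x v') 0)) = 1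
      rw [dist_append]
      have hco : ∀ i, dist (x v i) (x v' i) = dist (f v i) (f v' i) := by
        intro i
        simp only [hxdef, Real.dist_eq]
        ring_nf
      rw [Finset.sum_congr rfl fun i _ => by rw [hco i]]
      simp only [dist_self]
      rw [euclid_dist_sq]
      rw [show ∑ _j : Fin k, (0:ℝ) ^ 2 = 0 from by simp, add_zero, Real.sqrt_sq dist_nonneg]
      exact fdist hadj
    · show dist (eqv (Fin.append (x v) 0)) (eqv (Fin.append 0 (y w'))) = 1
      rw [dist_append]
      simp only [Real.dist_eq, sub_zero, zero_sub, abs_neg, sq_abs, Pi.zero_apply]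
      rw [hxs, hys, hr, Real.sqrt_one]
    · show dist (eqv (Fin.append 0 (y w))) (eqv (Fin.append (x v') 0)) = 1
      rw [dist_append]
      simp only [Real.dist_eq, sub_zero, zero_sub, abs_neg, sq_abs, Pi.zero_apply]
      rw [hxs, hys, hr, Real.sqrt_one]
    · have hadj := graphJoin_adj_rr huv
      show dist (eqv (Fin.append 0 (y w))) (eqv (Fin.append 0 (y w'))) = 1
      rw [dist_append]
      have hco : ∀ j, dist (y w j) (y w' j) = dist (g w j) (g w' j) := by
        intro j
        simp only [hydef, Real.dist_eq]
        ring_nf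
      simp only [Pi.zero_apply, dist_self]
      rw [Finset.sum_congr (rfl : (Finset.univ : Finset (Fin k)) = Finset.univ)
        fun j _ => by rw [hco j]]
      rw [euclid_dist_sq,
        show ∑ _i : Fin m, (0:ℝ) ^ 2 = 0 from by simp, zero_add, Real.sqrt_sq dist_nonneg]
      exact gdist hadj
  · -- segments
    rintro (a | a) (b | b) huv (c | c) hc1 hc2 ⟨t, s, ht, hs, hts, hz⟩
    · -- ll edge, c : V
      have hadj := graphJoin_adj_ll huv
      have hca : c ≠ a := fun h => hc1 (by rw [h])
      have hcb : c ≠ b := fun h => hc2 (by rw [h])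
      refine fseg hadj c hca hcb ⟨t, s, ht, hs, hts, ?_⟩
      ext i
      have hco := congrArg (fun z : EuclideanSpace ℝ (Fin _) => z (Fin.castAdd k i)) hz
      simp only [hF, Sum.elim_inl, PiLp.add_apply, PiLp.smul_apply, smul_eq_mul, eqv_apply,
        Fin.append_left] at hco
      simp only [hxdef] at hco
      simp only [PiLp.add_apply, PiLp.smul_apply, smul_eq_mul]
      linear_combination hco + (c₁ i) * hts
    · -- ll edge, c : W
      exfalso
      apply hyne c
      ext j
      have hco := congrArg (fun z : EuclideanSpace ℝ (Fin _) => z (Fin.natAdd m j)) hz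
      simp only [hF, Sum.elim_inl, Sum.elim_inr, PiLp.add_apply, PiLp.smul_apply, smul_eq_mul,
        eqv_apply, Fin.append_right, Pi.zero_apply] at hco
      simp only [Pi.zero_apply]
      linarith
    · -- lr edge, c : V
      have hca : c ≠ a := fun h => hc1 (by rw [h])
      by_cases hs0 : s = 0
      · apply hca
        apply hxinj
        ext i
        have hco := congrArg (fun z : EuclideanSpace ℝ (Fin _) => z (Fin.castAdd k i)) hz
        simp only [hF, Sum.elim_inl, Sum.elim_inr, PiLp.add_apply, PiLp.smul_apply, smul_eq_mul,
          eqv_apply, Fin.append_left, Pi.zero_apply] at hco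
        have ht1 : t = 1 := by linarith
        rw [hs0, ht1] at hco
        linarith
      · apply hyne b
        ext j
        have hco := congrArg (fun z : EuclideanSpace ℝ (Fin _) => z (Fin.natAdd m j)) hz
        simp only [hF, Sum.elim_inl, Sum.elim_inr, PiLp.add_apply, PiLp.smul_apply, smul_eq_mul,
          eqv_apply, Fin.append_right, Pi.zero_apply] at hco
        simp only [Pi.zero_apply]
        have : s * y b j = 0 := by linarith
        rcases mul_eq_zero.mp this with h' | h'
        · exact absurd h' hs0
        · exact h'
    · -- lr edge, c : W
      have hcb : c ≠ b := fun h => hc2 (by rw [h])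
      by_cases ht0 : t = 0
      · apply hcb
        apply hyinj
        ext j
        have hco := congrArg (fun z : EuclideanSpace ℝ (Fin _) => z (Fin.natAdd m j)) hz
        simp only [hF, Sum.elim_inl, Sum.elim_inr, PiLp.add_apply, PiLp.smul_apply, smul_eq_mul,
          eqv_apply, Fin.append_right, Pi.zero_apply] at hco
        have hs1 : s = 1 := by linarith
        rw [ht0, hs1] at hco
        linarith
      · apply hxne a
        ext i
        have hco := congrArg (fun z : EuclideanSpace ℝ (Fin _) => z (Fin.castAdd k i)) hz
        simp only [hF, Sum.elim_inl, Sum.elim_inr, PiLp.add_apply, PiLp.smul_apply, smul_eq_mul,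
          eqv_apply, Fin.append_left, Pi.zero_apply] at hco
        simp only [Pi.zero_apply]
        have : t * x a i = 0 := by linarith
        rcases mul_eq_zero.mp this with h' | h'
        · exact absurd h' ht0
        · exact h'
    · -- rl edge, c : V
      have hcb : c ≠ b := fun h => hc2 (by rw [h])
      by_cases ht0 : t = 0
      · apply hcb
        apply hxinj
        ext i
        have hco := congrArg (fun z : EuclideanSpace ℝ (Fin _) => z (Fin.castAdd k i)) hz
        simp only [hF, Sum.elim_inl, Sum.elim_inr, PiLp.add_apply, PiLp.smul_apply, smul_eq_mul,
          eqv_apply, Fin.append_left, Pi.zero_apply] at hco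
        have hs1 : s = 1 := by linarith
        rw [ht0, hs1] at hco
        linarith
      · apply hyne a
        ext j
        have hco := congrArg (fun z : EuclideanSpace ℝ (Fin _) => z (Fin.natAdd m j)) hz
        simp only [hF, Sum.elim_inl, Sum.elim_inr, PiLp.add_apply, PiLp.smul_apply, smul_eq_mul,
          eqv_apply, Fin.append_right, Pi.zero_apply] at hco
        simp only [Pi.zero_apply]
        have : t * y a j = 0 := by linarith
        rcases mul_eq_zero.mp this with h' | h'
        · exact absurd h' ht0
        · exact h'
    · -- rl edge, c : W
      have hca : c ≠ a := fun h => hc1 (by rw [h])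
      by_cases hs0 : s = 0
      · apply hca
        apply hyinj
        ext j
        have hco := congrArg (fun z : EuclideanSpace ℝ (Fin _) => z (Fin.natAdd m j)) hz
        simp only [hF, Sum.elim_inl, Sum.elim_inr, PiLp.add_apply, PiLp.smul_apply, smul_eq_mul,
          eqv_apply, Fin.append_right, Pi.zero_apply] at hco
        have ht1 : t = 1 := by linarith
        rw [hs0, ht1] at hco
        linarith
      · apply hxne b
        ext i
        have hco := congrArg (fun z : EuclideanSpace ℝ (Fin _) => z (Fin.castAdd k i)) hz
        simp only [hF, Sum.elim_inl, Sum.elim_inr, PiLp.add_apply, PiLp.smul_apply, smul_eq_mul,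
          eqv_apply, Fin.append_left, Pi.zero_apply] at hco
        simp only [Pi.zero_apply]
        have : s * x b i = 0 := by linarith
        rcases mul_eq_zero.mp this with h' | h'
        · exact absurd h' hs0
        · exact h'
    · -- rr edge, c : V
      exfalso
      apply hxne c
      ext i
      have hco := congrArg (fun z : EuclideanSpace ℝ (Fin _) => z (Fin.castAdd k i)) hz
      simp only [hF, Sum.elim_inl, Sum.elim_inr, PiLp.add_apply, PiLp.smul_apply, smul_eq_mul,
        eqv_apply, Fin.append_left, Pi.zero_apply] at hco
      simp only [Pi.zero_apply]
      linarith
    · -- rr edge, c : W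
      have hadj := graphJoin_adj_rr huv
      have hca : c ≠ a := fun h => hc1 (by rw [h])
      have hcb : c ≠ b := fun h => hc2 (by rw [h])
      refine gseg hadj c hca hcb ⟨t, s, ht, hs, hts, ?_⟩
      ext j
      have hco := congrArg (fun z : EuclideanSpace ℝ (Fin _) => z (Fin.natAdd m j)) hz
      simp only [hF, Sum.elim_inr, PiLp.add_apply, PiLp.smul_apply, smul_eq_mul, eqv_apply,
        Fin.append_right] at hco
      simp only [hydef] at hco
      simp only [PiLp.add_apply, PiLp.smul_apply, smul_eq_mul]
      linear_combination hco + (c₂ j) * hts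

lemma simplex_embedding {V : Type*} [Fintype V] (G : SimpleGraph V) :
    HasSphericalEmbeddingRadius G (Fintype.card V) ((Real.sqrt 2)⁻¹) := by
  classical
  set a : ℝ := (Real.sqrt 2)⁻¹ with ha
  have ha0 : 0 < a := by positivity
  have ha2 : a ^ 2 = 1 / 2 := by
    rw [ha, inv_pow, Real.sq_sqrt (by norm_num : (2:ℝ) ≥ 0)]
    norm_num
  set e := Fintype.equivFin V with he
  set f : V → EuclideanSpace ℝ (Fin (Fintype.card V)) :=
    fun v => EuclideanSpace.single (e v) a with hf
  have fapp : ∀ v i, f v i = if i = e v then a else 0 := by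
    intro v i
    simp [hf, EuclideanSpace.single_apply]
  refine ⟨f, ⟨?_, ?_, ?_⟩, 0, ?_⟩
  · intro u v huv
    by_contra hne
    have h1 : f u (e u) = f v (e u) := by rw [huv]
    rw [fapp, fapp, if_pos rfl, if_neg (fun h : e u = e v => hne (e.injective h))] at h1
    exact ha0.ne' h1
  · intro u v huv
    have hne : e u ≠ e v := fun h => huv.ne (e.injective h)
    have hsq : dist (f u) (f v) ^ 2 = 1 := by
      rw [← euclid_dist_sq]
      have key : ∀ i, dist (f u i) (f v i) ^ 2
          = (if i = e u then a ^ 2 else 0) + (if i = e v then a ^ 2 else 0) := by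
        intro i
        rw [fapp, fapp]
        by_cases h1 : i = e u
        · rw [if_pos h1, if_pos h1, if_neg (by rw [h1]; exact hne),
            if_neg (by rw [h1]; exact hne)]
          rw [Real.dist_eq]
          simp [sq_abs]
        · rw [if_neg h1, if_neg h1]
          by_cases h2 : i = e v
          · rw [if_pos h2, if_pos h2]
            rw [Real.dist_eq]
            simp [sq_abs]
          · rw [if_neg h2, if_neg h2]
            simp
      rw [Finset.sum_congr rfl fun i _ => key i, Finset.sum_add_distrib]
      simp only [Finset.sum_ite_eq', Finset.mem_univ, if_pos]
      rw [ha2]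
      norm_num
    nlinarith [dist_nonneg (x := f u) (y := f v)]
  · intro u v huv c hcu hcv ⟨t, s, ht, hs, hts, hz⟩
    have hcu' : e c ≠ e u := fun h => hcu (e.injective h)
    have hcv' : e c ≠ e v := fun h => hcv (e.injective h)
    have hco := congrArg (fun z : EuclideanSpace ℝ (Fin _) => z (e c)) hz
    simp only [PiLp.add_apply, PiLp.smul_apply, smul_eq_mul] at hco
    rw [fapp, fapp, fapp, if_pos rfl, if_neg hcu', if_neg hcv'] at hco
    simp at hco
    exact ha0.ne' hco.symm
  · intro v
    rw [dist_eq_norm, sub_zero, hf]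
    rw [EuclideanSpace.norm_single]
    exact abs_of_pos ha0
def IsUDGen {V : Type*} (G : SimpleGraph V) {E : Type*} [NormedAddCommGroup E]
    [NormedSpace ℝ E] (f : V → E) : Prop :=
  Function.Injective f ∧
  (∀ ⦃u v⦄, G.Adj u v → dist (f u) (f v) = 1) ∧
  (∀ ⦃u v⦄, G.Adj u v → ∀ w, w ≠ u → w ≠ v → f w ∉ segment ℝ (f u) (f v))

lemma IsUDGen.comp {V : Type*} {G : SimpleGraph V} {E F : Type*} [NormedAddCommGroup E]
    [NormedSpace ℝ E] [NormedAddCommGroup F] [NormedSpace ℝ F]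
    (Φ : E →ᵃⁱ[ℝ] F) {f : V → E} (h : IsUDGen G f) : IsUDGen G (fun v => Φ (f v)) := by
  obtain ⟨hinj, hdist, hseg⟩ := h
  refine ⟨fun a b hab => hinj (Φ.injective hab), fun u v huv => by
    rw [Φ.dist_map]; exact hdist huv, fun u v huv w hwu hwv hmem => ?_⟩
  have : Φ (f w) ∈ Φ.toAffineMap '' segment ℝ (f u) (f v) := by
    rw [image_segment]; exact hmem
  obtain ⟨z, hz, hz'⟩ := this
  exact hseg huv w hwu hwv (Φ.injective hz' ▸ hz)

lemma IsUDGen.of_comp {V : Type*} {G : SimpleGraph V} {E F : Type*} [NormedAddCommGroup E]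
    [NormedSpace ℝ E] [NormedAddCommGroup F] [NormedSpace ℝ F]
    (Φ : E →ᵃⁱ[ℝ] F) {f : V → E} (h : IsUDGen G (fun v => Φ (f v))) : IsUDGen G f := by
  obtain ⟨hinj, hdist, hseg⟩ := h
  refine ⟨fun a b hab => hinj (by simp [hab]), fun u v huv => by
    have := hdist huv; rwa [Φ.dist_map] at this, fun u v huv w hwu hwv hmem => ?_⟩
  refine hseg huv w hwu hwv ?_
  have : Φ (f w) ∈ Φ.toAffineMap '' segment ℝ (f u) (f v) := ⟨f w, hmem, rfl⟩
  rwa [image_segment] at this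

lemma isUD_iff {V : Type*} {G : SimpleGraph V} {n : ℕ} {f : V → EuclideanSpace ℝ (Fin n)} :
    IsUDEmbedding G f ↔ IsUDGen G f := Iff.rfl

lemma graphJoin_adj_ll' {V W : Type*} {G : SimpleGraph V} {H : SimpleGraph W} {a b : V}
    (h : G.Adj a b) : (graphJoin G H).Adj (Sum.inl a) (Sum.inl b) := by
  rw [graphJoin, SimpleGraph.fromRel_adj]
  exact ⟨by simp [h.ne], Or.inl h⟩

lemma graphJoin_adj_rr' {V W : Type*} {G : SimpleGraph V} {H : SimpleGraph W} {a b : W}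
    (h : H.Adj a b) : (graphJoin G H).Adj (Sum.inr a) (Sum.inr b) := by
  rw [graphJoin, SimpleGraph.fromRel_adj]
  exact ⟨by simp [h.ne], Or.inl h⟩

lemma graphJoin_adj_lr {V W : Type*} {G : SimpleGraph V} {H : SimpleGraph W} (a : V) (b : W) :
    (graphJoin G H).Adj (Sum.inl a) (Sum.inr b) := by
  rw [graphJoin, SimpleGraph.fromRel_adj]
  exact ⟨by simp, Or.inl trivial⟩

lemma eq_of_sq_eq_sq {x y : ℝ} (hx : 0 ≤ x) (hy : 0 ≤ y) (h : x ^ 2 = y ^ 2) : x = y := by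
  rw [← Real.sqrt_sq hx, ← Real.sqrt_sq hy, h]

set_option maxHeartbeats 1000000 in
lemma decomposition {V W : Type*} [Fintype V] [Fintype W] {G : SimpleGraph V}
    {H : SimpleGraph W} (hV : 1 < Fintype.card V) (hW : 1 < Fintype.card W) {N : ℕ}
    (hemb : HasUDEmbedding (graphJoin G H) N) :
    ∃ (m k : ℕ) (r₁ r₂ d : ℝ), m + k ≤ N ∧ 0 < r₁ ∧ 0 < r₂ ∧ 0 ≤ d ∧
      r₁ ^ 2 + r₂ ^ 2 + d ^ 2 = 1 ∧ (N ≤ m + k → d = 0) ∧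
      HasSphericalEmbeddingRadius G m r₁ ∧ HasSphericalEmbeddingRadius H k r₂ := by
  classical
  obtain ⟨F, Finj, Fdist, Fseg⟩ := hemb
  obtain ⟨v₀, v₁, hv01⟩ := Fintype.exists_pair_of_one_lt_card hV
  obtain ⟨w₀, w₁, hw01⟩ := Fintype.exists_pair_of_one_lt_card hW
  set a : V → EuclideanSpace ℝ (Fin N) := fun v => F (Sum.inl v) with hadef
  set b : W → EuclideanSpace ℝ (Fin N) := fun w => F (Sum.inr w) with hbdef
  have hunit : ∀ v w, ‖a v - b w‖ = 1 := by
    intro v w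
    rw [← dist_eq_norm]
    exact Fdist (graphJoin_adj_lr v w)
  have horth : ∀ v v' w w', ⟪a v - a v', b w - b w'⟫ = 0 := by
    intro v v' w w'
    have key : ∀ (x y : EuclideanSpace ℝ (Fin N)), ‖x - y‖ = 1 → ⟪x, y⟫ = (‖x‖ ^ 2 + ‖y‖ ^ 2 - 1) / 2 := by
      intro x y h
      have h2 : ‖x - y‖ ^ 2 = 1 := by rw [h]; norm_num
      rw [norm_sub_sq_real] at h2
      linarith
    have h1 := key _ _ (hunit v w)
    have h2 := key _ _ (hunit v w')
    have h3 := key _ _ (hunit v' w)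
    have h4 := key _ _ (hunit v' w')
    rw [inner_sub_left, inner_sub_right, inner_sub_right, h1, h2, h3, h4]
    ring
  set U : Submodule ℝ (EuclideanSpace ℝ (Fin N)) := Submodule.span ℝ (Set.range fun v => a v - a v₀) with hU
  set U' : Submodule ℝ (EuclideanSpace ℝ (Fin N)) := Submodule.span ℝ (Set.range fun w => b w - b w₀) with hU'
  have memU : ∀ v, a v - a v₀ ∈ U := fun v => Submodule.subset_span ⟨v, rfl⟩
  have memU' : ∀ w, b w - b w₀ ∈ U' := fun w => Submodule.subset_span ⟨w, rfl⟩
  have bUo : ∀ w w', b w - b w' ∈ Uᗮ := by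
    intro w w'
    rw [Submodule.mem_orthogonal]
    intro u hu
    induction hu using Submodule.span_induction with
    | mem z hz => obtain ⟨v, rfl⟩ := hz; exact horth v v₀ w w'
    | zero => exact inner_zero_left _
    | add z₁ z₂ _ _ h1 h2 => rw [inner_add_left, h1, h2]; ring
    | smul c z _ h1 => rw [real_inner_smul_left, h1]; ring
  have aUo : ∀ v v', a v - a v' ∈ U'ᗮ := by
    intro v v'
    rw [Submodule.mem_orthogonal]
    intro u hu
    induction hu using Submodule.span_induction with
    | mem z hz =>
        obtain ⟨w, rfl⟩ := hz
        rw [real_inner_comm]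
        exact horth v v' w w₀
    | zero => exact inner_zero_left _
    | add z₁ z₂ _ _ h1 h2 => rw [inner_add_left, h1, h2]; ring
    | smul c z _ h1 => rw [real_inner_smul_left, h1]; ring
  have hUle : U ≤ U'ᗮ := by
    rw [hU, Submodule.span_le]
    rintro z ⟨v, rfl⟩
    exact aUo v v₀
  have hU'le : U' ≤ Uᗮ := by
    rw [hU', Submodule.span_le]
    rintro z ⟨w, rfl⟩
    exact bUo w w₀
  set p : EuclideanSpace ℝ (Fin N) := a v₀ + (U.orthogonalProjectionOnto (b w₀ - a v₀) : EuclideanSpace ℝ (Fin N)) with hp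
  set q : EuclideanSpace ℝ (Fin N) := b w₀ + (U'.orthogonalProjectionOnto (a v₀ - b w₀) : EuclideanSpace ℝ (Fin N)) with hq
  have haU : ∀ v, a v - p ∈ U := by
    intro v
    have : a v - p = (a v - a v₀) - (U.orthogonalProjectionOnto (b w₀ - a v₀) : EuclideanSpace ℝ (Fin N)) := by
      rw [hp]; abel
    rw [this]
    exact Submodule.sub_mem _ (memU v) (U.orthogonalProjectionOnto (b w₀ - a v₀)).2
  have hbU : ∀ w, b w - q ∈ U' := by
    intro w
    have : b w - q = (b w - b w₀) - (U'.orthogonalProjectionOnto (a v₀ - b w₀) : EuclideanSpace ℝ (Fin N)) := by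
      rw [hq]; abel
    rw [this]
    exact Submodule.sub_mem _ (memU' w) (U'.orthogonalProjectionOnto (a v₀ - b w₀)).2
  have hpb : ∀ w, p - b w ∈ Uᗮ := by
    intro w
    have : p - b w = -((b w₀ - a v₀) - (U.orthogonalProjectionOnto (b w₀ - a v₀) : EuclideanSpace ℝ (Fin N)))
        + (b w₀ - b w) := by rw [hp]; abel
    rw [this]
    exact Submodule.add_mem _ (Submodule.neg_mem _
      (Submodule.sub_starProjection_mem_orthogonal (K := U) (b w₀ - a v₀))) (bUo w₀ w)
  have hqa : ∀ v, q - a v ∈ U'ᗮ := by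
    intro v
    have : q - a v = -((a v₀ - b w₀) - (U'.orthogonalProjectionOnto (a v₀ - b w₀) : EuclideanSpace ℝ (Fin N)))
        + (a v₀ - a v) := by rw [hq]; abel
    rw [this]
    exact Submodule.add_mem _ (Submodule.neg_mem _
      (Submodule.sub_starProjection_mem_orthogonal (K := U') (a v₀ - b w₀))) (aUo v₀ v)
  -- spheres
  have hib : ∀ v w, ‖a v - p‖ ^ 2 + ‖p - b w‖ ^ 2 = 1 := by
    intro v w
    have hd : a v - b w = (a v - p) + (p - b w) := by abel
    have hi : ⟪a v - p, p - b w⟫ = 0 :=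
      Submodule.inner_right_of_mem_orthogonal (haU v) (hpb w)
    have := hunit v w
    rw [hd] at this
    have h2 : ‖(a v - p) + (p - b w)‖ ^ 2 = 1 := by rw [this]; norm_num
    rw [norm_add_sq_real, hi] at h2
    linarith
  have hib' : ∀ w v, ‖b w - q‖ ^ 2 + ‖q - a v‖ ^ 2 = 1 := by
    intro w v
    have hd : b w - a v = (b w - q) + (q - a v) := by abel
    have hi : ⟪b w - q, q - a v⟫ = 0 :=
      Submodule.inner_right_of_mem_orthogonal (hbU w) (hqa v)
    have := hunit v w
    rw [← norm_neg, neg_sub, hd] at this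
    have h2 : ‖(b w - q) + (q - a v)‖ ^ 2 = 1 := by rw [this]; norm_num
    rw [norm_add_sq_real, hi] at h2
    linarith
  set r₁ : ℝ := ‖a v₀ - p‖ with hr₁
  set r₂ : ℝ := ‖b w₀ - q‖ with hr₂
  have hr1 : ∀ v, ‖a v - p‖ = r₁ := by
    intro v
    refine eq_of_sq_eq_sq (norm_nonneg _) (norm_nonneg _) ?_
    have h1 := hib v w₀
    have h2 := hib v₀ w₀
    linarith
  have hr2 : ∀ w, ‖b w - q‖ = r₂ := by
    intro w
    refine eq_of_sq_eq_sq (norm_nonneg _) (norm_nonneg _) ?_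
    have h1 := hib' w v₀
    have h2 := hib' w₀ v₀
    linarith
  have hr1pos : 0 < r₁ := by
    rcases (norm_nonneg (a v₀ - p)).lt_or_eq with h | h
    · exact h
    · exfalso
      have e0 : a v₀ = p := sub_eq_zero.mp (norm_eq_zero.mp h.symm)
      have e1 : a v₁ = p := by
        have h1 := hr1 v₁
        rw [hr₁, ← h] at h1
        exact sub_eq_zero.mp (norm_eq_zero.mp h1)
      exact hv01 (Sum.inl.inj (Finj (show F (Sum.inl v₀) = F (Sum.inl v₁) from
        e0.trans e1.symm)))
  have hr2pos : 0 < r₂ := by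
    rcases (norm_nonneg (b w₀ - q)).lt_or_eq with h | h
    · exact h
    · exfalso
      have e0 : b w₀ = q := sub_eq_zero.mp (norm_eq_zero.mp h.symm)
      have e1 : b w₁ = q := by
        have h1 := hr2 w₁
        rw [hr₂, ← h] at h1
        exact sub_eq_zero.mp (norm_eq_zero.mp h1)
      exact hw01 (Sum.inr.inj (Finj (show F (Sum.inr w₀) = F (Sum.inr w₁) from
        e0.trans e1.symm)))
  have hpqU : p - q ∈ Uᗮ := by
    have hdc : p - q = (p - b w₀) + (b w₀ - q) := by abel
    have h2 : b w₀ - q ∈ Uᗮ := hU'le (by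
      have hx : b w₀ - q = -(U'.orthogonalProjectionOnto (a v₀ - b w₀) : EuclideanSpace ℝ (Fin N)) := by
        rw [hq]; abel
      rw [hx]
      exact Submodule.neg_mem _ (U'.orthogonalProjectionOnto (a v₀ - b w₀)).2)
    rw [hdc]
    exact Submodule.add_mem _ (hpb w₀) h2
  have hpqU' : p - q ∈ U'ᗮ := by
    have hdc : p - q = -(q - a v₀) + -(a v₀ - p) := by abel
    have h2 : a v₀ - p ∈ U'ᗮ := hUle (by
      have hx : a v₀ - p = -(U.orthogonalProjectionOnto (b w₀ - a v₀) : EuclideanSpace ℝ (Fin N)) := by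
        rw [hp]; abel
      rw [hx]
      exact Submodule.neg_mem _ (U.orthogonalProjectionOnto (b w₀ - a v₀)).2)
    rw [hdc]
    exact Submodule.add_mem _ (Submodule.neg_mem _ (hqa v₀)) (Submodule.neg_mem _ h2)
  set d : ℝ := ‖p - q‖ with hd
  have hkey : r₁ ^ 2 + r₂ ^ 2 + d ^ 2 = 1 := by
    have hz1 : q - b w₀ ∈ U' := by
      have hx : q - b w₀ = (U'.orthogonalProjectionOnto (a v₀ - b w₀) : EuclideanSpace ℝ (Fin N)) := by
        rw [hq]; abel
      rw [hx]
      exact (U'.orthogonalProjectionOnto (a v₀ - b w₀)).2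
    have hi1 : ⟪a v₀ - p, p - q⟫ = 0 :=
      Submodule.inner_right_of_mem_orthogonal (haU v₀) hpqU
    have hi2 : ⟪a v₀ - p, q - b w₀⟫ = 0 := by
      rw [real_inner_comm]
      exact Submodule.inner_right_of_mem_orthogonal hz1 (hUle (haU v₀))
    have hi3 : ⟪p - q, q - b w₀⟫ = 0 := by
      rw [real_inner_comm]
      exact Submodule.inner_right_of_mem_orthogonal hz1 hpqU'
    have hn := hunit v₀ w₀
    have hdecomp : a v₀ - b w₀ = (a v₀ - p) + ((p - q) + (q - b w₀)) := by abel
    rw [hdecomp] at hn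
    have h2 : ‖(a v₀ - p) + ((p - q) + (q - b w₀))‖ ^ 2 = 1 := by rw [hn]; norm_num
    rw [norm_add_sq_real, norm_add_sq_real, inner_add_right, hi1, hi2, hi3] at h2
    have e1 : ‖a v₀ - p‖ = r₁ := hr1 v₀
    have e3 : ‖q - b w₀‖ = r₂ := by rw [← norm_neg, neg_sub]
    rw [e1, e3, ← hd] at h2
    linarith
  have hdisj : U ⊓ U' = ⊥ := ((Submodule.orthogonal_disjoint U').symm.mono_left hUle).eq_bot
  have hsum : Module.finrank ℝ ↥(U ⊔ U')
      = Module.finrank ℝ ↥U + Module.finrank ℝ ↥U' := by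
    have h1 := Submodule.finrank_sup_add_finrank_inf_eq U U'
    rw [hdisj, finrank_bot, add_zero] at h1
    exact h1
  have hrank : Module.finrank ℝ ↥U + Module.finrank ℝ ↥U' ≤ N := by
    have h2 : Module.finrank ℝ ↥(U ⊔ U') ≤ Module.finrank ℝ (EuclideanSpace ℝ (Fin N)) :=
      Submodule.finrank_le _
    rw [finrank_euclideanSpace_fin, hsum] at h2
    exact h2
  have heqd : N ≤ Module.finrank ℝ ↥U + Module.finrank ℝ ↥U' → d = 0 := by
    intro hN
    have htop : U ⊔ U' = ⊤ := by
      apply Submodule.eq_top_of_finrank_eq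
      rw [finrank_euclideanSpace_fin, hsum]
      omega
    have hmem : p - q ∈ (U ⊔ U')ᗮ := by
      rw [Submodule.mem_orthogonal]
      intro u hu
      obtain ⟨u₁, hu₁, u₂, hu₂, rfl⟩ := Submodule.mem_sup.mp hu
      rw [inner_add_left, (Submodule.mem_orthogonal _ _).mp hpqU u₁ hu₁,
          (Submodule.mem_orthogonal _ _).mp hpqU' u₂ hu₂]
      ring
    rw [htop, Submodule.top_orthogonal_eq_bot, Submodule.mem_bot] at hmem
    rw [hd, hmem, norm_zero]
  -- restriction embeddings
  have hGa : IsUDGen G a :=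
    ⟨fun u v h => Sum.inl.inj (Finj h), fun u v huv => Fdist (graphJoin_adj_ll' huv),
      fun u v huv w hwu hwv hmem => Fseg (graphJoin_adj_ll' huv) (Sum.inl w)
        (fun hh => hwu (Sum.inl.inj hh)) (fun hh => hwv (Sum.inl.inj hh)) hmem⟩
  have hHb : IsUDGen H b :=
    ⟨fun u v h => Sum.inr.inj (Finj h), fun u v huv => Fdist (graphJoin_adj_rr' huv),
      fun u v huv w hwu hwv hmem => Fseg (graphJoin_adj_rr' huv) (Sum.inr w)
        (fun hh => hwu (Sum.inr.inj hh)) (fun hh => hwv (Sum.inr.inj hh)) hmem⟩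
  have hGt : IsUDGen G (fun v => a v - p) := by
    have hfe : (fun v => a v - p)
        = fun v => (AffineIsometryEquiv.constVAdd ℝ (EuclideanSpace ℝ (Fin N))
            (-p)).toAffineIsometry (a v) := by
      funext v
      simp [AffineIsometryEquiv.constVAdd, sub_eq_neg_add]
      rfl
    rw [hfe]
    exact hGa.comp _
  have hHt : IsUDGen H (fun w => b w - q) := by
    have hfe : (fun w => b w - q)
        = fun w => (AffineIsometryEquiv.constVAdd ℝ (EuclideanSpace ℝ (Fin N))
            (-q)).toAffineIsometry (b w) := by
      funext w
      simp [AffineIsometryEquiv.constVAdd, sub_eq_neg_add]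
      rfl
    rw [hfe]
    exact hHb.comp _
  set g₁ : V → ↥U := fun v => ⟨a v - p, haU v⟩ with hg₁
  set g₂ : W → ↥U' := fun w => ⟨b w - q, hbU w⟩ with hg₂
  have hGg : IsUDGen G g₁ := IsUDGen.of_comp (U.subtypeₗᵢ.toAffineIsometry) hGt
  have hHg : IsUDGen H g₂ := IsUDGen.of_comp (U'.subtypeₗᵢ.toAffineIsometry) hHt
  have hGF : IsUDGen G (fun v => (stdOrthonormalBasis ℝ ↥U).repr (g₁ v)) :=
    hGg.comp (stdOrthonormalBasis ℝ ↥U).repr.toLinearIsometry.toAffineIsometry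
  have hHF : IsUDGen H (fun w => (stdOrthonormalBasis ℝ ↥U').repr (g₂ w)) :=
    hHg.comp (stdOrthonormalBasis ℝ ↥U').repr.toLinearIsometry.toAffineIsometry
  refine ⟨Module.finrank ℝ ↥U, Module.finrank ℝ ↥U', r₁, r₂, d, hrank, hr1pos, hr2pos,
    norm_nonneg _, hkey, heqd, ⟨_, isUD_iff.mpr hGF, 0, fun v => ?_⟩,
    ⟨_, isUD_iff.mpr hHF, 0, fun w => ?_⟩⟩
  · rw [dist_eq_norm, sub_zero, LinearIsometryEquiv.norm_map]
    exact hr1 v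
  · rw [dist_eq_norm, sub_zero, LinearIsometryEquiv.norm_map]
    exact hr2 w

/-- If `G` and `H` (each with more than one vertex, each having a spherical
dimension) can be embedded on spheres of radii `r₁, r₂ ∈ (0,1)` in dimensions `sdim G`,
`sdim H` with `r₁² + r₂² = 1`, then `dim (G + H) = sdim G + sdim H`; otherwise
`dim (G + H) > sdim G + sdim H`. -/
theorem stmt0 {V W : Type} [Fintype V] [Fintype W] (G : SimpleGraph V) (H : SimpleGraph W)
    (hV : 1 < Fintype.card V) (hW : 1 < Fintype.card W)
    (hGs : ∃ n, HasSphericalEmbedding G n) (hHs : ∃ n, HasSphericalEmbedding H n) :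
    ((∃ r₁ r₂ : ℝ, 0 < r₁ ∧ r₁ < 1 ∧ 0 < r₂ ∧ r₂ < 1 ∧ r₁ ^ 2 + r₂ ^ 2 = 1 ∧
        HasSphericalEmbeddingRadius G (sphericalDim G) r₁ ∧
        HasSphericalEmbeddingRadius H (sphericalDim H) r₂) →
      graphDim (graphJoin G H) = sphericalDim G + sphericalDim H) ∧
    ((¬ ∃ r₁ r₂ : ℝ, 0 < r₁ ∧ r₁ < 1 ∧ 0 < r₂ ∧ r₂ < 1 ∧ r₁ ^ 2 + r₂ ^ 2 = 1 ∧
        HasSphericalEmbeddingRadius G (sphericalDim G) r₁ ∧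
        HasSphericalEmbeddingRadius H (sphericalDim H) r₂) →
      sphericalDim G + sphericalDim H < graphDim (graphJoin G H)) := by
  classical
  have hVc : ¬ Fintype.card V ≤ 1 := by omega
  have hWc : ¬ Fintype.card W ≤ 1 := by omega
  obtain ⟨nG, hnG⟩ := hGs
  obtain ⟨nH, hnH⟩ := hHs
  have hGmem : HasSphericalEmbedding G (sphericalDim G) := by
    rw [sphericalDim, if_neg hVc]
    have hmemG : nG ∈ {n | HasSphericalEmbedding G n} := hnG
    exact Nat.sInf_mem ⟨nG, hmemG⟩
  have hHmem : HasSphericalEmbedding H (sphericalDim H) := by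
    rw [sphericalDim, if_neg hWc]
    have hmemH : nH ∈ {n | HasSphericalEmbedding H n} := hnH
    exact Nat.sInf_mem ⟨nH, hmemH⟩
  have hhalf : ((Real.sqrt 2)⁻¹ : ℝ) ^ 2 + ((Real.sqrt 2)⁻¹ : ℝ) ^ 2 = 1 := by
    rw [inv_pow, Real.sq_sqrt (by norm_num : (2:ℝ) ≥ 0)]
    norm_num
  have hhalfpos : (0:ℝ) < (Real.sqrt 2)⁻¹ := by positivity
  have hjoin_ne : HasUDEmbedding (graphJoin G H) (Fintype.card V + Fintype.card W) :=
    join_construct G H hhalfpos hhalfpos hhalf (simplex_embedding G) (simplex_embedding H)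
  have hDmem : HasUDEmbedding (graphJoin G H) (graphDim (graphJoin G H)) := by
    rw [graphDim]
    exact Nat.sInf_mem (s := {n | HasUDEmbedding (graphJoin G H) n}) ⟨_, hjoin_ne⟩
  obtain ⟨m, k, r₁, r₂, d, hmk, h1, h2, hd0, hkey, heqd, hGe, hHe⟩ :=
    decomposition hV hW hDmem
  have hr1lt : r₁ < 1 := by nlinarith
  have hr2lt : r₂ < 1 := by nlinarith
  have hGleq : sphericalDim G ≤ m := by
    rw [sphericalDim, if_neg hVc]
    exact Nat.sInf_le ⟨r₁, h1, hr1lt, hGe⟩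
  have hHleq : sphericalDim H ≤ k := by
    rw [sphericalDim, if_neg hWc]
    exact Nat.sInf_le ⟨r₂, h2, hr2lt, hHe⟩
  have hlow : sphericalDim G + sphericalDim H ≤ graphDim (graphJoin G H) :=
    le_trans (add_le_add hGleq hHleq) hmk
  constructor
  · rintro ⟨s₁, s₂, hs₁, hs₁1, hs₂, hs₂1, hss, hG1, hH1⟩
    have hup : graphDim (graphJoin G H) ≤ sphericalDim G + sphericalDim H := by
      rw [graphDim]
      exact Nat.sInf_le (join_construct G H hs₁ hs₂ hss hG1 hH1)
    omega
  · intro hnot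
    by_contra hle
    have hDeq : graphDim (graphJoin G H) = sphericalDim G + sphericalDim H := by omega
    have hm : m = sphericalDim G := by omega
    have hk : k = sphericalDim H := by omega
    have hd : d = 0 := heqd (by omega)
    exact hnot ⟨r₁, r₂, h1, hr1lt, h2, hr2lt, by nlinarith, hm ▸ hGe, hk ▸ hHe⟩
end

section
/- The complete bipartite graph K_{3,1} (equivalently, the join K_1 + ε_3) has spherical dimension 3, is minor minimal with respect to spherical dimension 3, and is, up to graph isomorphism, the unique simple graph on 4 vertices that is minor minimal with respect to spherical dimension 3. -/
/-! ### Auxiliary lemmas -/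

open Function

section Geo

lemma dist2_eq (x y : EuclideanSpace ℝ (Fin 2)) :
    dist x y = Real.sqrt ((x 0 - y 0)^2 + (x 1 - y 1)^2) := by
  rw [EuclideanSpace.dist_eq, Fin.sum_univ_two]
  simp [Real.dist_eq, sq_abs]

lemma dist2_sq (x y : EuclideanSpace ℝ (Fin 2)) :
    (x 0 - y 0)^2 + (x 1 - y 1)^2 = (dist x y)^2 := by
  rw [dist2_eq, Real.sq_sqrt (by positivity)]

lemma eq_of_coords2 {x y : EuclideanSpace ℝ (Fin 2)} (h0 : x 0 = y 0) (h1 : x 1 = y 1) :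
    x = y := by
  have : dist x y = 0 := by rw [dist2_eq, h0, h1]; simp
  exact dist_eq_zero.mp this

lemma dist3_eq (x y : EuclideanSpace ℝ (Fin 3)) :
    dist x y = Real.sqrt ((x 0 - y 0)^2 + (x 1 - y 1)^2 + (x 2 - y 2)^2) := by
  rw [EuclideanSpace.dist_eq, Fin.sum_univ_three]
  simp [Real.dist_eq, sq_abs]

lemma seg_avoid {n : ℕ} {c : EuclideanSpace ℝ (Fin n)} {r : ℝ} (hr : 0 < r)
    {u v w : EuclideanSpace ℝ (Fin n)} (hu : dist u c = r) (hv : dist v c = r)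
    (hw : dist w c = r) (hwu : w ≠ u) (hwv : w ≠ v) (huv : u ≠ v) :
    w ∉ segment ℝ u v := by
  intro hmem
  rw [← insert_endpoints_openSegment] at hmem
  rcases hmem with h | h | h
  · exact hwu h
  · exact hwv h
  · have hsub := (strictConvex_closedBall ℝ c r).openSegment_subset
      (by simp [Metric.mem_closedBall, hu.le]) (by simp [Metric.mem_closedBall, hv.le]) huv
    have := hsub h
    rw [interior_closedBall c (ne_of_gt hr)] at this
    simp only [Metric.mem_ball] at this
    exact absurd hw (by linarith)

/-- packaging: injective + on sphere + unit adjacent distances gives a spherical embedding -/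
lemma hse_of {V : Type*} (G : SimpleGraph V) (n : ℕ) (f : V → EuclideanSpace ℝ (Fin n))
    (c : EuclideanSpace ℝ (Fin n)) (r : ℝ) (hr0 : 0 < r) (hr1 : r < 1)
    (hinj : Function.Injective f) (hsph : ∀ v, dist (f v) c = r)
    (hd : ∀ u v, G.Adj u v → dist (f u) (f v) = 1) :
    HasSphericalEmbedding G n := by
  refine ⟨r, hr0, hr1, f, ⟨hinj, fun u v h => hd u v h, ?_⟩, c, hsph⟩
  intro u v huv w hwu hwv
  exact seg_avoid hr0 (hsph u) (hsph v) (hsph w)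
    (fun h => hwu (hinj h)) (fun h => hwv (hinj h))
    (fun h => (G.ne_of_adj huv) (hinj h))

end Geo

section Configs

lemma s3sq : Real.sqrt 3 ^ 2 = 3 := Real.sq_sqrt (by norm_num)
lemma s3pos : 0 < Real.sqrt 3 := Real.sqrt_pos.mpr (by norm_num)
lemma s2sq : Real.sqrt 2 ^ 2 = 2 := Real.sq_sqrt (by norm_num)
lemma s2pos : 0 < Real.sqrt 2 := Real.sqrt_pos.mpr (by norm_num)

def prs : Fin 6 → Fin 4 × Fin 4 := ![(0,1),(0,2),(0,3),(1,2),(1,3),(2,3)]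

def adjB (b : Fin 6 → Bool) (u v : Fin 4) : Bool :=
  decide (∃ i : Fin 6, b i = true ∧ (prs i = (u, v) ∨ prs i = (v, u)))

def pat1 (u v : Fin 4) : Bool :=
  decide (((u : ℕ) + 1) % 4 = (v : ℕ) ∨ ((v : ℕ) + 1) % 4 = (u : ℕ))

def pat2 (u v : Fin 4) : Bool :=
  decide (u ≠ v ∧ u ≠ 3 ∧ v ≠ 3)

lemma prs_covers : ∀ x y : Fin 4, x ≠ y → ∃ i, prs i = (x, y) ∨ prs i = (y, x) := by decide

set_option maxHeartbeats 4000000 in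
set_option maxRecDepth 10000 in
lemma combin_key : ∀ b : Fin 6 → Bool,
    (¬ ∃ (q x y z : Fin 4), x ≠ y ∧ x ≠ z ∧ y ≠ z ∧
        adjB b q x = true ∧ adjB b q y = true ∧ adjB b q z = true) →
    ∃ σ : Fin 4 → Fin 4, Function.Injective σ ∧
      ((∀ u v, adjB b u v = true → pat1 (σ u) (σ v) = true) ∨
       (∀ u v, adjB b u v = true → pat2 (σ u) (σ v) = true)) := by decide

noncomputable def Qpts : Fin 4 → EuclideanSpace ℝ (Fin 2) :=
  ![!₂[(1:ℝ)/2, 1/2], !₂[1/2, -(1/2)], !₂[-(1/2), -(1/2)], !₂[-(1/2), 1/2]]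

lemma Qpts_inj : Function.Injective Qpts := by
  intro i j h
  fin_cases i <;> fin_cases j <;> first
    | rfl
    | (exfalso
       have h0 := congrArg (fun p => p 0) h
       have h1 := congrArg (fun p => p 1) h
       simp [Qpts] at h0 h1 <;> linarith)

lemma Qpts_sphere : ∀ i, dist (Qpts i) 0 = Real.sqrt (1/2) := by
  intro i
  fin_cases i <;>
    · rw [dist2_eq]
      norm_num [Qpts]

lemma Qpts_dist : ∀ i j, pat1 i j = true → dist (Qpts i) (Qpts j) = 1 := by
  intro i j h
  fin_cases i <;> fin_cases j <;> simp [pat1] at h <;>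
    · rw [dist2_eq]
      norm_num [Qpts]

noncomputable def Tpts : Fin 4 → EuclideanSpace ℝ (Fin 2) :=
  ![!₂[0, Real.sqrt 3 / 3], !₂[1/2, -(Real.sqrt 3 / 6)], !₂[-(1/2), -(Real.sqrt 3 / 6)],
    !₂[Real.sqrt 3 / 3, 0]]

lemma Tpts_inj : Function.Injective Tpts := by
  intro i j h
  fin_cases i <;> fin_cases j <;> first
    | rfl
    | (exfalso
       have h0 := congrArg (fun p => p 0) h
       have h1 := congrArg (fun p => p 1) h
       simp [Tpts] at h0 h1 <;> nlinarith [s3sq, s3pos])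

lemma Tpts_sphere : ∀ i, dist (Tpts i) 0 = Real.sqrt 3 / 3 := by
  intro i
  fin_cases i <;>
    · rw [dist2_eq]
      rw [show ((0 : EuclideanSpace ℝ (Fin 2)) 0) = 0 from rfl,
          show ((0 : EuclideanSpace ℝ (Fin 2)) 1) = 0 from rfl]
      rw [show Real.sqrt 3 / 3 = Real.sqrt ((Real.sqrt 3 / 3)^2) from
        (Real.sqrt_sq (by positivity)).symm]
      congr 1
      first
        | (simp [Tpts]; nlinarith [s3sq, s3pos])
        | (simp [Tpts]; norm_num)
        | simp [Tpts]

lemma Tpts_dist : ∀ i j, pat2 i j = true → dist (Tpts i) (Tpts j) = 1 := by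
  intro i j h
  fin_cases i <;> fin_cases j <;> simp_all [pat2] <;>
    · rw [dist2_eq]
      rw [show (1:ℝ) = Real.sqrt 1 from Real.sqrt_one.symm]
      congr 1
      first
        | (simp [Tpts]; nlinarith [s3sq, s3pos])
        | (simp [Tpts]; norm_num)
        | simp [Tpts]

noncomputable def Ppts : Fin 4 → EuclideanSpace ℝ (Fin 3) :=
  ![!₂[Real.sqrt 2/4, Real.sqrt 2/4, Real.sqrt 2/4],
    !₂[Real.sqrt 2/4, -(Real.sqrt 2/4), -(Real.sqrt 2/4)],
    !₂[-(Real.sqrt 2/4), Real.sqrt 2/4, -(Real.sqrt 2/4)],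
    !₂[-(Real.sqrt 2/4), -(Real.sqrt 2/4), Real.sqrt 2/4]]

lemma Ppts_inj : Function.Injective Ppts := by
  intro i j h
  fin_cases i <;> fin_cases j <;> first
    | rfl
    | (exfalso
       have h0 := congrArg (fun p => p 0) h
       have h1 := congrArg (fun p => p 1) h
       simp [Ppts] at h0 h1 <;> nlinarith [s2sq, s2pos])

lemma Ppts_sphere : ∀ i, dist (Ppts i) 0 = Real.sqrt (3/8) := by
  intro i
  fin_cases i <;>
    · rw [dist3_eq]
      rw [show ((0 : EuclideanSpace ℝ (Fin 3)) 0) = 0 from rfl,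
          show ((0 : EuclideanSpace ℝ (Fin 3)) 1) = 0 from rfl,
          show ((0 : EuclideanSpace ℝ (Fin 3)) 2) = 0 from rfl]
      congr 1
      first
        | (simp [Ppts]; nlinarith [s2sq, s2pos])
        | (simp [Ppts]; norm_num)
        | simp [Ppts]

lemma Ppts_dist : ∀ i j, i ≠ j → dist (Ppts i) (Ppts j) = 1 := by
  intro i j h
  fin_cases i <;> fin_cases j <;> simp_all <;>
    · rw [dist3_eq]
      rw [show (1:ℝ) = Real.sqrt 1 from Real.sqrt_one.symm]
      congr 1
      first
        | (simp [Ppts]; nlinarith [s2sq, s2pos])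
        | (simp [Ppts]; norm_num)
        | simp [Ppts]

end Configs

section Embeds

/-- any graph on at most 4 vertices has a spherical embedding in dimension 3 -/
lemma embed3 {W : Type*} [Fintype W] (H : SimpleGraph W) (h4 : Fintype.card W ≤ 4) :
    HasSphericalEmbedding H 3 := by
  classical
  let ew : W ↪ Fin 4 :=
    (Fintype.equivFin W).toEmbedding.trans (Fin.castLEEmb h4)
  have hr1 : Real.sqrt (3/8) < 1 := by
    have := Real.sqrt_lt_sqrt (by norm_num) (show (3:ℝ)/8 < 1 by norm_num)
    rwa [Real.sqrt_one] at this
  exact hse_of H 3 (fun w => Ppts (ew w)) 0 (Real.sqrt (3/8))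
    (Real.sqrt_pos.mpr (by norm_num)) hr1
    (Ppts_inj.comp ew.injective) (fun w => Ppts_sphere (ew w))
    (fun u v h => Ppts_dist _ _ (fun he => (H.ne_of_adj h) (ew.injective he)))

/-- any graph on at most 4 vertices with no vertex of degree 3 has a spherical
embedding in dimension 2 -/
lemma embed2 {W : Type*} [Fintype W] (H : SimpleGraph W) (h4 : Fintype.card W ≤ 4)
    (hno : ¬ ∃ (v x y z : W), x ≠ y ∧ x ≠ z ∧ y ≠ z ∧
        H.Adj v x ∧ H.Adj v y ∧ H.Adj v z) :
    HasSphericalEmbedding H 2 := by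
  classical
  let ew : W ↪ Fin 4 :=
    (Fintype.equivFin W).toEmbedding.trans (Fin.castLEEmb h4)
  let b : Fin 6 → Bool :=
    fun i => decide (∃ u w, H.Adj u w ∧ ew u = (prs i).1 ∧ ew w = (prs i).2)
  have hback : ∀ p q : Fin 4, adjB b p q = true →
      ∃ u w, H.Adj u w ∧ ew u = p ∧ ew w = q := by
    intro p q h
    rw [adjB, decide_eq_true_eq] at h
    obtain ⟨i, hbi, hpair⟩ := h
    rw [show b i = decide (∃ u w, H.Adj u w ∧ ew u = (prs i).1 ∧ ew w = (prs i).2) from rfl,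
      decide_eq_true_eq] at hbi
    obtain ⟨u, w, huw, hu, hw⟩ := hbi
    rcases hpair with hp | hp
    · exact ⟨u, w, huw, by rw [hu, hp], by rw [hw, hp]⟩
    · exact ⟨w, u, huw.symm, by rw [hw, hp], by rw [hu, hp]⟩
  have hfwd : ∀ u w, H.Adj u w → adjB b (ew u) (ew w) = true := by
    intro u w huw
    have hne : ew u ≠ ew w := fun he => (H.ne_of_adj huw) (ew.injective he)
    obtain ⟨i, hi⟩ := prs_covers _ _ hne
    rw [adjB, decide_eq_true_eq]
    refine ⟨i, ?_, ?_⟩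
    · rw [show b i = decide (∃ u w, H.Adj u w ∧ ew u = (prs i).1 ∧ ew w = (prs i).2) from rfl,
        decide_eq_true_eq]
      rcases hi with hi | hi
      · exact ⟨u, w, huw, by rw [hi], by rw [hi]⟩
      · exact ⟨w, u, huw.symm, by rw [hi], by rw [hi]⟩
    · rcases hi with hi | hi
      · exact Or.inl hi
      · exact Or.inr hi
  have hnoB : ¬ ∃ (q x y z : Fin 4), x ≠ y ∧ x ≠ z ∧ y ≠ z ∧
      adjB b q x = true ∧ adjB b q y = true ∧ adjB b q z = true := by
    rintro ⟨q, x, y, z, hxy, hxz, hyz, a1, a2, a3⟩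
    obtain ⟨u1, x1, h1, hu1, hx1⟩ := hback _ _ a1
    obtain ⟨u2, y1, h2, hu2, hy1⟩ := hback _ _ a2
    obtain ⟨u3, z1, h3, hu3, hz1⟩ := hback _ _ a3
    have e12 : u1 = u2 := ew.injective (hu1.trans hu2.symm)
    have e13 : u1 = u3 := ew.injective (hu1.trans hu3.symm)
    refine hno ⟨u1, x1, y1, z1, ?_, ?_, ?_, h1, by rw [e12]; exact h2, by rw [e13]; exact h3⟩
    · intro he; exact hxy (by rw [← hx1, ← hy1, he])
    · intro he; exact hxz (by rw [← hx1, ← hz1, he])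
    · intro he; exact hyz (by rw [← hy1, ← hz1, he])
  obtain ⟨σ, hσ, hpat⟩ := combin_key b hnoB
  rcases hpat with hpat | hpat
  · have hr1 : Real.sqrt (1/2) < 1 := by
      have := Real.sqrt_lt_sqrt (by norm_num) (show (1:ℝ)/2 < 1 by norm_num)
      rwa [Real.sqrt_one] at this
    exact hse_of H 2 (fun w => Qpts (σ (ew w))) 0 (Real.sqrt (1/2))
      (Real.sqrt_pos.mpr (by norm_num)) hr1
      (Qpts_inj.comp (hσ.comp ew.injective)) (fun w => Qpts_sphere _)
      (fun u v h => Qpts_dist _ _ (hpat _ _ (hfwd _ _ h)))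
  · have hr1 : Real.sqrt 3 / 3 < 1 := by nlinarith [s3sq, s3pos]
    exact hse_of H 2 (fun w => Tpts (σ (ew w))) 0 (Real.sqrt 3 / 3)
      (by positivity) hr1
      (Tpts_inj.comp (hσ.comp ew.injective)) (fun w => Tpts_sphere _)
      (fun u v h => Tpts_dist _ _ (hpat _ _ (hfwd _ _ h)))

end Embeds

section Lower

lemma circle2_alg {e10 e11 e20 e21 e30 e31 v0 v1 : ℝ}
    (hv : ¬ (v0 = 0 ∧ v1 = 0))
    (h1 : e10^2 + e11^2 = 1) (h2 : e20^2 + e21^2 = 1) (h3 : e30^2 + e31^2 = 1)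
    (d1 : e10*v0 + e11*v1 = 1/2) (d2 : e20*v0 + e21*v1 = 1/2)
    (d3 : e30*v0 + e31*v1 = 1/2) :
    (e10 = e20 ∧ e11 = e21) ∨ (e10 = e30 ∧ e11 = e31) ∨ (e20 = e30 ∧ e21 = e31) := by
  have hvv : v0^2 + v1^2 > 0 := by
    rcases not_and_or.mp hv with h | h <;> positivity
  have key : ∀ a0 a1 b0 b1 : ℝ, a0*v0 + a1*v1 = 1/2 → b0*v0 + b1*v1 = 1/2 →
      a0*v1 - a1*v0 = b0*v1 - b1*v0 → a0 = b0 ∧ a1 = b1 := by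
    intro a0 a1 b0 b1 ha hb hc
    have h0 : (v0^2 + v1^2) * (a0 - b0) = 0 := by linear_combination v0*ha - v0*hb + v1*hc
    have h1' : (v0^2 + v1^2) * (a1 - b1) = 0 := by linear_combination v1*ha - v1*hb - v0*hc
    constructor
    · have := (mul_eq_zero.mp h0).resolve_left (ne_of_gt hvv); linarith
    · have := (mul_eq_zero.mp h1').resolve_left (ne_of_gt hvv); linarith
  have q1 : (e10*v1 - e11*v0)^2 = (v0^2+v1^2) - 1/4 := by
    linear_combination (v0^2+v1^2)*h1 - (e10*v0+e11*v1+1/2) * d1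
  have q2 : (e20*v1 - e21*v0)^2 = (v0^2+v1^2) - 1/4 := by
    linear_combination (v0^2+v1^2)*h2 - (e20*v0+e21*v1+1/2) * d2
  have q3 : (e30*v1 - e31*v0)^2 = (v0^2+v1^2) - 1/4 := by
    linear_combination (v0^2+v1^2)*h3 - (e30*v0+e31*v1+1/2) * d3
  have e12 := sq_eq_sq_iff_eq_or_eq_neg.mp (q1.trans q2.symm)
  have e13 := sq_eq_sq_iff_eq_or_eq_neg.mp (q1.trans q3.symm)
  rcases e12 with h | h
  · exact Or.inl (key _ _ _ _ d1 d2 h)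
  · rcases e13 with h' | h'
    · exact Or.inr (Or.inl (key _ _ _ _ d1 d3 h'))
    · exact Or.inr (Or.inr (key _ _ _ _ d2 d3 (by linarith)))

variable {W : Type*} (H : SimpleGraph W) (v x y z : W)

lemma lower0 (hxy : x ≠ y) : ¬ HasSphericalEmbedding H 0 := by
  rintro ⟨r, hr0, hr1, f, ⟨hinj, -, -⟩, c, hsph⟩
  have : dist (f x) (f y) = 0 := by
    rw [EuclideanSpace.dist_eq]
    simp
  exact hxy (hinj (dist_eq_zero.mp this))

lemma lower1 (hxy : x ≠ y) (hxz : x ≠ z) (hyz : y ≠ z) :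
    ¬ HasSphericalEmbedding H 1 := by
  rintro ⟨r, hr0, hr1, f, ⟨hinj, -, -⟩, c, hsph⟩
  have heq : ∀ a b : W, f a 0 = f b 0 → a = b := by
    intro a b hab
    apply hinj
    apply dist_eq_zero.mp
    rw [EuclideanSpace.dist_eq, Fin.sum_univ_one, Real.dist_eq, hab]
    simp
  have hval : ∀ a : W, f a 0 = c 0 + r ∨ f a 0 = c 0 - r := by
    intro a
    have h1 : dist (f a) c = r := hsph a
    rw [EuclideanSpace.dist_eq, Fin.sum_univ_one] at h1
    have h2 : (dist (f a 0) (c 0))^2 = r^2 := by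
      rw [← h1, Real.sq_sqrt (by positivity)]
    rw [Real.dist_eq, sq_abs] at h2
    have h3 : (f a 0 - c 0 - r) * (f a 0 - c 0 + r) = 0 := by nlinarith
    rcases mul_eq_zero.mp h3 with h | h
    · left; linarith
    · right; linarith
  rcases hval x with hx | hx <;> rcases hval y with hy | hy <;> rcases hval z with hz | hz
  · exact hxy (heq x y (by rw [hx, hy]))
  · exact hxy (heq x y (by rw [hx, hy]))
  · exact hxz (heq x z (by rw [hx, hz]))
  · exact hyz (heq y z (by rw [hy, hz]))
  · exact hyz (heq y z (by rw [hy, hz]))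
  · exact hxz (heq x z (by rw [hx, hz]))
  · exact hxy (heq x y (by rw [hx, hy]))
  · exact hxy (heq x y (by rw [hx, hy]))

lemma lower2 (hxy : x ≠ y) (hxz : x ≠ z) (hyz : y ≠ z)
    (a1 : H.Adj v x) (a2 : H.Adj v y) (a3 : H.Adj v z) :
    ¬ HasSphericalEmbedding H 2 := by
  rintro ⟨r, hr0, hr1, f, ⟨hinj, hd, -⟩, c, hsph⟩
  have hds : ∀ a : W, (f a 0 - c 0)^2 + (f a 1 - c 1)^2 = r^2 := by
    intro a
    rw [dist2_sq, hsph a]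
  have hun : ∀ a : W, H.Adj v a →
      (f a 0 - f v 0)^2 + (f a 1 - f v 1)^2 = 1 := by
    intro a ha
    rw [dist2_sq, dist_comm, hd ha]
    norm_num
  have hdot : ∀ a : W, H.Adj v a →
      (f a 0 - f v 0) * (c 0 - f v 0) + (f a 1 - f v 1) * (c 1 - f v 1) = 1/2 := by
    intro a ha
    have h1 := hun a ha
    have h2 := hds a
    have h3 := hds v
    linear_combination (h1 + h3 - h2)/2
  have hvne : ¬ (c 0 - f v 0 = 0 ∧ c 1 - f v 1 = 0) := by
    rintro ⟨hc0, hc1⟩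
    have hfvc : f v = c := eq_of_coords2 (by linarith) (by linarith)
    have h := hsph v
    rw [hfvc, dist_self] at h
    exact absurd h.symm (ne_of_gt hr0)
  have := circle2_alg hvne (hun x a1) (hun y a2) (hun z a3)
    (hdot x a1) (hdot y a2) (hdot z a3)
  rcases this with ⟨p, q⟩ | ⟨p, q⟩ | ⟨p, q⟩
  · exact hxy (hinj (eq_of_coords2 (by linarith) (by linarith)))
  · exact hxz (hinj (eq_of_coords2 (by linarith) (by linarith)))
  · exact hyz (hinj (eq_of_coords2 (by linarith) (by linarith)))

end Lower

section Sdim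

lemma sdim_lt3_of_hse2 {W : Type*} [Fintype W] (H : SimpleGraph W)
    (h : HasSphericalEmbedding H 2) : sphericalDim H < 3 := by
  unfold sphericalDim
  split_ifs
  · norm_num
  · exact lt_of_le_of_lt (Nat.sInf_le h) (by norm_num)

lemma sdim_eq3 {W : Type*} [Fintype W] (H : SimpleGraph W)
    (hc : Fintype.card W ≤ 4) (hc2 : 1 < Fintype.card W)
    (v x y z : W) (hxy : x ≠ y) (hxz : x ≠ z) (hyz : y ≠ z)
    (a1 : H.Adj v x) (a2 : H.Adj v y) (a3 : H.Adj v z) :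
    sphericalDim H = 3 := by
  have h3 : HasSphericalEmbedding H 3 := embed3 H hc
  unfold sphericalDim
  rw [if_neg (by omega)]
  have hmem := Nat.sInf_mem (⟨3, h3⟩ : Set.Nonempty {n | HasSphericalEmbedding H n})
  have hle : sInf {n | HasSphericalEmbedding H n} ≤ 3 := Nat.sInf_le h3
  set m := sInf {n | HasSphericalEmbedding H n} with hm
  have : m = 0 ∨ m = 1 ∨ m = 2 ∨ m = 3 := by omega
  rcases this with h | h | h | h
  · rw [h] at hmem; exact absurd hmem (lower0 H x y hxy)
  · rw [h] at hmem; exact absurd hmem (lower1 H x y z hxy hxz hyz)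
  · rw [h] at hmem; exact absurd hmem (lower2 H v x y z hxy hxz hyz a1 a2 a3)
  · exact h

end Sdim

section MinorFacts

lemma minor_card_le {W V : Type*} [Fintype W] [Fintype V] {H : SimpleGraph W}
    {G : SimpleGraph V} (h : IsMinorOf H G) : Fintype.card W ≤ Fintype.card V := by
  classical
  obtain ⟨φ, hconn, hdisj, -⟩ := h
  have hne : ∀ w, ∃ t, t ∈ φ w := by
    intro w
    obtain ⟨t⟩ := (hconn w).nonempty
    exact ⟨t.1, t.2⟩
  choose rep hrep using hne
  have hinj : Function.Injective rep := by
    intro a b hab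
    by_contra hne'
    exact Set.disjoint_left.mp (hdisj hne') (hrep a) (hab ▸ hrep b)
  exact Fintype.card_le_of_injective rep hinj

lemma induce_singleton_connected {V : Type*} (G : SimpleGraph V) (t : V) :
    (SimpleGraph.induce {t} G).Connected := by
  rw [SimpleGraph.connected_iff]
  refine ⟨fun a b => ?_, ⟨⟨t, rfl⟩⟩⟩
  have : a = b := Subtype.ext (a.2.trans b.2.symm)
  rw [this]

end MinorFacts

section K31

/-- the graph `K_{3,1}` -/
abbrev K31 : SimpleGraph (Fin 1 ⊕ Fin 3) :=
  graphJoin (⊤ : SimpleGraph (Fin 1)) (⊥ : SimpleGraph (Fin 3))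

lemma K31_card : Fintype.card (Fin 1 ⊕ Fin 3) = 4 := by simp

lemma K31_adj_lr (a : Fin 1) (b : Fin 3) : K31.Adj (Sum.inl a) (Sum.inr b) := by
  have hne : (Sum.inl a : Fin 1 ⊕ Fin 3) ≠ Sum.inr b := by simp
  exact ⟨hne, Or.inl trivial⟩

lemma K31_touch {p q : Fin 1 ⊕ Fin 3} (h : K31.Adj p q) :
    p = Sum.inl 0 ∨ q = Sum.inl 0 := by
  rcases p with a | a
  · left; rw [Subsingleton.elim a 0]
  · rcases q with b | b
    · right; rw [Subsingleton.elim b 0]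
    · exact (h.2.elim id id).elim

/-- a star with all other vertices as leaves, on 4 vertices, is isomorphic to `K31` -/
lemma star_iso {W : Type*} [Fintype W] (H : SimpleGraph W)
    (hcard : Fintype.card W = 4) (v : W)
    (hadj : ∀ w, w ≠ v → H.Adj v w)
    (hstar : ∀ u w, H.Adj u w → u = v ∨ w = v) :
    Nonempty (H ≃g K31) := by
  classical
  have hc3 : Fintype.card {w : W // ¬ w = v} = 3 := by
    rw [Fintype.card_subtype_compl, Fintype.card_subtype_eq, hcard]
  let e2 : {w : W // ¬ w = v} ≃ Fin 3 := Fintype.equivFinOfCardEq hc3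
  let g : W → Fin 1 ⊕ Fin 3 :=
    fun w => if h : w = v then Sum.inl 0 else Sum.inr (e2 ⟨w, h⟩)
  have hg0 : g v = Sum.inl 0 := dif_pos rfl
  have hgn : ∀ (w : W) (hw : ¬ w = v), g w = Sum.inr (e2 ⟨w, hw⟩) :=
    fun w hw => dif_neg hw
  have hginj : Function.Injective g := by
    intro a b hab
    by_cases ha : a = v <;> by_cases hb : b = v
    · rw [ha, hb]
    · subst ha; rw [hg0, hgn b hb] at hab; exact absurd hab (by simp)
    · subst hb; rw [hg0, hgn a ha] at hab; exact absurd hab (by simp)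
    · rw [hgn a ha, hgn b hb] at hab
      exact Subtype.ext_iff.mp (e2.injective (Sum.inr_injective hab))
  have hbij : Function.Bijective g :=
    (Fintype.bijective_iff_injective_and_card g).mpr ⟨hginj, by rw [hcard, K31_card]⟩
  refine ⟨⟨Equiv.ofBijective g hbij, ?_⟩⟩
  intro a b
  show K31.Adj (g a) (g b) ↔ H.Adj a b
  constructor
  · intro h
    by_cases ha : a = v <;> by_cases hb : b = v
    · subst ha; subst hb; exact (K31.loopless.irrefl _ h).elim
    · subst ha; exact hadj b hb
    · subst hb; exact (hadj a ha).symm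
    · exfalso
      rw [hgn a ha, hgn b hb] at h
      rcases K31_touch h with h' | h' <;> simp at h'
  · intro h
    rcases hstar a b h with ha | hb'
    · have hb : ¬ b = v := fun hb => H.ne_of_adj h (ha.trans hb.symm)
      subst ha
      rw [hg0, hgn b hb]
      exact K31_adj_lr _ _
    · have ha : ¬ a = v := fun ha => H.ne_of_adj h (ha.trans hb'.symm)
      subst hb'
      rw [hg0, hgn a ha]
      exact (K31_adj_lr _ _).symm

end K31

lemma quad_univ {W : Type*} [Fintype W] [DecidableEq W] {v x y z : W}
    (hvx : v ≠ x) (hvy : v ≠ y) (hvz : v ≠ z)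
    (hxy : x ≠ y) (hxz : x ≠ z) (hyz : y ≠ z) (hcard : Fintype.card W ≤ 4) :
    Fintype.card W = 4 ∧ ∀ w : W, w = v ∨ w = x ∨ w = y ∨ w = z := by
  have hs : ({v, x, y, z} : Finset W).card = 4 := by
    rw [Finset.card_insert_of_notMem (by simp [hvx, hvy, hvz]),
      Finset.card_insert_of_notMem (by simp [hxy, hxz]),
      Finset.card_insert_of_notMem (by simp [hyz]), Finset.card_singleton]
  have hc4 : Fintype.card W = 4 := by
    have := Finset.card_le_univ ({v, x, y, z} : Finset W)
    rw [hs] at this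
    omega
  have huniv : ({v, x, y, z} : Finset W) = Finset.univ :=
    Finset.eq_univ_of_card _ (hs.trans hc4.symm)
  refine ⟨hc4, fun w => ?_⟩
  have : w ∈ ({v, x, y, z} : Finset W) := huniv ▸ Finset.mem_univ w
  simpa [Finset.mem_insert, Finset.mem_singleton] using this

/-- `K_{3,1}` (that is, `K₁ + ε₃`) has spherical dimension 3, is minor minimal
with respect to spherical dimension 3, and is the unique simple graph on 4 vertices (up to
isomorphism) that is minor minimal with respect to spherical dimension 3. -/
theorem stmt5 :
    sphericalDim (graphJoin (⊤ : SimpleGraph (Fin 1)) (⊥ : SimpleGraph (Fin 3))) = 3 ∧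
    MinorMinimalSDim (graphJoin (⊤ : SimpleGraph (Fin 1)) (⊥ : SimpleGraph (Fin 3))) 3 ∧
    ∀ (W : Type) [Fintype W] (H : SimpleGraph W), Fintype.card W = 4 →
      MinorMinimalSDim H 3 →
      Nonempty (H ≃g graphJoin (⊤ : SimpleGraph (Fin 1)) (⊥ : SimpleGraph (Fin 3))) := by
  have hdim : sphericalDim K31 = 3 := by
    refine sdim_eq3 K31 (le_of_eq K31_card) (by rw [K31_card]; norm_num)
      (Sum.inl 0) (Sum.inr 0) (Sum.inr 1) (Sum.inr 2)
      (by decide) (by decide) (by decide)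
      (K31_adj_lr 0 0) (K31_adj_lr 0 1) (K31_adj_lr 0 2)
  refine ⟨hdim, ⟨hdim, ?_⟩, ?_⟩
  · -- minor minimality
    intro W instW H hne hproper
    classical
    obtain ⟨hminor, hniso⟩ := hproper
    have hcard4 : Fintype.card W ≤ 4 := by
      have := minor_card_le hminor
      rwa [K31_card] at this
    by_cases hdeg : ∃ v x y z : W, x ≠ y ∧ x ≠ z ∧ y ≠ z ∧
        H.Adj v x ∧ H.Adj v y ∧ H.Adj v z
    · exfalso
      obtain ⟨v, x, y, z, hxy, hxz, hyz, a1, a2, a3⟩ := hdeg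
      obtain ⟨φ, hconn, hdisj, hedge⟩ := hminor
      have htouch : ∀ {u w : W}, H.Adj u w →
          Sum.inl 0 ∈ φ u ∨ Sum.inl 0 ∈ φ w := by
        intro u w h
        obtain ⟨p, hp, q, hq, hpq⟩ := hedge h
        rcases K31_touch hpq with h' | h'
        · exact Or.inl (h' ▸ hp)
        · exact Or.inr (h' ▸ hq)
      have hvin : Sum.inl 0 ∈ φ v := by
        by_contra hvn
        have h1 := (htouch a1).resolve_left hvn
        have h2 := (htouch a2).resolve_left hvn
        exact Set.disjoint_left.mp (hdisj hxy) h1 h2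
      have hstar : ∀ u w, H.Adj u w → u = v ∨ w = v := by
        intro u w h
        by_contra hc
        push_neg at hc
        rcases htouch h with h' | h'
        · exact Set.disjoint_left.mp (hdisj hc.1) h' hvin
        · exact Set.disjoint_left.mp (hdisj hc.2) h' hvin
      obtain ⟨hc4, hall⟩ := quad_univ (H.ne_of_adj a1) (H.ne_of_adj a2)
        (H.ne_of_adj a3) hxy hxz hyz hcard4
      have hadjall : ∀ w, w ≠ v → H.Adj v w := by
        intro w hw
        rcases hall w with h | h | h | h
        · exact absurd h hw
        · rwa [h]
        · rwa [h]
        · rwa [h]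
      exact hniso (star_iso H hc4 v hadjall hstar)
    · exact sdim_lt3_of_hse2 H (embed2 H hcard4 hdeg)
  · -- uniqueness
    intro W instW H hcard hmm
    classical
    obtain ⟨hdim3, hmin⟩ := hmm
    by_cases hdeg : ∃ v x y z : W, x ≠ y ∧ x ≠ z ∧ y ≠ z ∧
        H.Adj v x ∧ H.Adj v y ∧ H.Adj v z
    · obtain ⟨v, x, y, z, hxy, hxz, hyz, a1, a2, a3⟩ := hdeg
      obtain ⟨hc4, hall⟩ := quad_univ (H.ne_of_adj a1) (H.ne_of_adj a2)
        (H.ne_of_adj a3) hxy hxz hyz (le_of_eq hcard)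
      have hadjall : ∀ w, w ≠ v → H.Adj v w := by
        intro w hw
        rcases hall w with h | h | h | h
        · exact absurd h hw
        · rwa [h]
        · rwa [h]
        · rwa [h]
      have hstar : ∀ u w, H.Adj u w → u = v ∨ w = v := by
        by_contra hc
        push_neg at hc
        obtain ⟨u, w, huw, hu, hw⟩ := hc
        have hvu : H.Adj v u := hadjall u hu
        have hvw : H.Adj v w := hadjall w hw
        let H' : SimpleGraph W :=
          { Adj := fun p q => (p = v ∧ q ≠ v) ∨ (q = v ∧ p ≠ v)
            symm := ⟨by intro p q h; tauto⟩
            loopless := ⟨by intro p h; tauto⟩ }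
        have hadj' : ∀ p q : W, H'.Adj p q ↔ ((p = v ∧ q ≠ v) ∨ (q = v ∧ p ≠ v)) :=
          fun p q => Iff.rfl
        have hprop : IsProperMinorOf H' H := by
          constructor
          · refine ⟨fun w => {w}, fun w => induce_singleton_connected H w, ?_, ?_⟩
            · intro a b hab
              exact Set.disjoint_singleton.mpr hab
            · intro p q hpq
              rcases (hadj' p q).mp hpq with ⟨hp, hq⟩ | ⟨hq, hp⟩
              · exact ⟨p, rfl, q, rfl, by subst hp; exact hadjall q hq⟩
              · exact ⟨p, rfl, q, rfl, by subst hq; exact (hadjall p hp).symm⟩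
          · rintro ⟨e⟩
            have pull : ∀ (a b : W), H.Adj a b → H'.Adj (e.symm a) (e.symm b) := by
              intro a b hab
              have := e.map_rel_iff (a := e.symm a) (b := e.symm b)
              rw [RelIso.apply_symm_apply, RelIso.apply_symm_apply] at this
              exact this.mp hab
            have t1 := (hadj' _ _).mp (pull v u hvu)
            have t2 := (hadj' _ _).mp (pull v w hvw)
            have t3 := (hadj' _ _).mp (pull u w huw)
            tauto
        have hlt := hmin W H' ⟨v⟩ hprop
        have heq : sphericalDim H' = 3 := by
          refine sdim_eq3 H' (le_of_eq hc4) (by rw [hc4]; norm_num) v x y z hxy hxz hyz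
            ?_ ?_ ?_
          · exact (hadj' v x).mpr (Or.inl ⟨rfl, (H.ne_of_adj a1).symm⟩)
          · exact (hadj' v y).mpr (Or.inl ⟨rfl, (H.ne_of_adj a2).symm⟩)
          · exact (hadj' v z).mpr (Or.inl ⟨rfl, (H.ne_of_adj a3).symm⟩)
        rw [heq] at hlt
        exact absurd hlt (by omega)
      exact star_iso H hc4 v hadjall hstar
    · exfalso
      have := sdim_lt3_of_hse2 H (embed2 H (le_of_eq hcard) hdeg)
      omega
end

section
/- Let X be a finite subset of ℝ^{n+m} contained in a sphere S = {x ∈ A : ‖x − c‖ = r} of radius r > 0, where A is an n-dimensional affine subspace of ℝ^{n+m} with c ∈ A, and suppose the affine hull of X equals A (so S is the unique such sphere containing X). Then for every d > r, the set of points p ∈ ℝ^{n+m} satisfying ‖p − x‖ = d for every x ∈ X is exactly the sphere of radius √(d² − r²) centered at c and contained in the m-dimensional affine subspace through c orthogonal to A, i.e., the set {p ∈ c + A^⊥ : ‖p − c‖ = √(d² − r²)}, where A^⊥ is the orthogonal complement of the direction space of A. -/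
/-- If a finite set `X ⊆ ℝ^{n+m}` lies on the sphere of radius `r > 0` centered
at `c` inside an `n`-dimensional affine subspace `A` (with `c ∈ A`) and the affine hull of
`X` is `A`, then for every `d > r` the set of points at distance `d` from every point of `X`
is exactly the sphere of radius `√(d² - r²)` centered at `c` in the affine subspace through
`c` orthogonal to `A`. -/
theorem stmt9 {n m : ℕ} (X : Set (EuclideanSpace ℝ (Fin (n + m)))) (hXfin : X.Finite)
    (A : AffineSubspace ℝ (EuclideanSpace ℝ (Fin (n + m))))
    (c : EuclideanSpace ℝ (Fin (n + m))) (hc : c ∈ A)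
    (hdim : Module.finrank ℝ A.direction = n)
    (r : ℝ) (hr : 0 < r) (hX : ∀ x ∈ X, x ∈ A ∧ dist x c = r)
    (hspan : affineSpan ℝ X = A)
    (d : ℝ) (hd : r < d) :
    {p : EuclideanSpace ℝ (Fin (n + m)) | ∀ x ∈ X, dist p x = d} =
      {p : EuclideanSpace ℝ (Fin (n + m)) |
        p ∈ AffineSubspace.mk' c A.directionᗮ ∧ dist p c = Real.sqrt (d ^ 2 - r ^ 2)} := by
  have hdirX : A.direction = vectorSpan ℝ X := by
    rw [← hspan, direction_affineSpan]
  have hXne : X.Nonempty := by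
    by_contra h
    rw [Set.not_nonempty_iff_eq_empty] at h
    rw [h, AffineSubspace.span_empty] at hspan
    rw [← hspan] at hc
    exact AffineSubspace.notMem_bot ℝ _ c hc
  have hd2 : 0 < d ^ 2 - r ^ 2 := by nlinarith
  ext p
  simp only [Set.mem_setOf_eq]
  constructor
  · intro hp
    have key : ∀ x ∈ X, inner ℝ (p - c) (x - c) = (‖p - c‖ ^ 2 + r ^ 2 - d ^ 2) / 2 := by
      intro x hx
      have h1 : ‖p - x‖ = d := by rw [← dist_eq_norm]; exact hp x hx
      have h2 : ‖x - c‖ = r := by rw [← dist_eq_norm]; exact (hX x hx).2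
      have e : p - x = (p - c) - (x - c) := by abel
      have h3 := @norm_sub_sq_real (EuclideanSpace ℝ (Fin (n + m))) _ _ (p - c) (x - c)
      rw [← e, h1, h2] at h3
      linarith
    have horth : p - c ∈ A.directionᗮ := by
      rw [hdirX, Submodule.mem_orthogonal]
      intro u hu
      rw [vectorSpan_def] at hu
      induction hu using Submodule.span_induction with
      | mem v hv =>
        obtain ⟨x, hx, y, hy, rfl⟩ := Set.mem_vsub.mp hv
        have : (x : EuclideanSpace ℝ (Fin (n + m))) -ᵥ y = (x - c) - (y - c) := by
          simp only [vsub_eq_sub]; abel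
        rw [this, real_inner_comm, inner_sub_right, key x hx, key y hy]
        ring
      | zero => simp
      | add v w _ _ hv hw => rw [inner_add_left, hv, hw]; ring
      | smul a v _ hv => rw [real_inner_smul_left, hv]; ring
    obtain ⟨x₀, hx₀⟩ := hXne
    have hx₀d : (x₀ : EuclideanSpace ℝ (Fin (n + m))) - c ∈ A.direction := by
      have := AffineSubspace.vsub_mem_direction (hX x₀ hx₀).1 hc
      simpa [vsub_eq_sub] using this
    have hz : inner ℝ (p - c) (x₀ - c) = (0 : ℝ) :=
      (Submodule.mem_orthogonal' _ _).mp horth _ hx₀d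
    have hnorm : ‖p - c‖ ^ 2 = d ^ 2 - r ^ 2 := by
      have := key x₀ hx₀
      rw [hz] at this
      linarith
    refine ⟨?_, ?_⟩
    · rw [AffineSubspace.mem_mk']
      simpa [vsub_eq_sub] using horth
    · rw [dist_eq_norm, ← hnorm, Real.sqrt_sq (norm_nonneg _)]
  · rintro ⟨hpA, hpd⟩
    have horth : p - c ∈ A.directionᗮ := by
      have := (AffineSubspace.mem_mk').mp hpA
      simpa [vsub_eq_sub] using this
    have hnorm : ‖p - c‖ ^ 2 = d ^ 2 - r ^ 2 := by
      rw [← dist_eq_norm, hpd, Real.sq_sqrt (le_of_lt hd2)]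
    intro x hx
    have hxd : (x : EuclideanSpace ℝ (Fin (n + m))) - c ∈ A.direction := by
      have := AffineSubspace.vsub_mem_direction (hX x hx).1 hc
      simpa [vsub_eq_sub] using this
    have hz : inner ℝ (p - c) (x - c) = (0 : ℝ) :=
      (Submodule.mem_orthogonal' _ _).mp horth _ hxd
    have h2 : ‖x - c‖ = r := by rw [← dist_eq_norm]; exact (hX x hx).2
    have e : p - x = (p - c) - (x - c) := by abel
    have h3 := @norm_sub_sq_real (EuclideanSpace ℝ (Fin (n + m))) _ _ (p - c) (x - c)
    rw [← e, hz, h2] at h3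
    have hsq : ‖p - x‖ ^ 2 = d ^ 2 := by rw [h3, hnorm]; ring
    rw [dist_eq_norm, ← Real.sqrt_sq (norm_nonneg (p - x)), hsq,
      Real.sqrt_sq (by linarith : (0:ℝ) ≤ d)]
end

section
/- For every n ≥ 3 with n ≠ 6, the cycle graph C_n has spherical dimension 2, while C_6 has spherical dimension 3. -/
section SDimHelpers
open Real Complex
open Fin.NatCast

theorem seg_free {E : Type*} [NormedAddCommGroup E] [InnerProductSpace ℝ E]
    {u v w c : E} {ρ : ℝ}
    (hu : dist u c = ρ) (hv : dist v c = ρ) (hw : dist w c = ρ)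
    (huv : u ≠ v) (hwu : w ≠ u) (hwv : w ≠ v) : w ∉ segment ℝ u v := by
  rintro ⟨a, b, ha, hb, hab, habw⟩
  rcases eq_or_lt_of_le ha with ha0 | ha0
  · exact hwv (by rw [← habw, ← ha0, zero_smul, zero_add,
      show b = 1 by linarith, one_smul])
  rcases eq_or_lt_of_le hb with hb0 | hb0
  · exact hwu (by rw [← habw, ← hb0, zero_smul, add_zero,
      show a = 1 by linarith, one_smul])
  · have h1 : ‖u - c‖ ≤ ρ := le_of_eq (by rw [← dist_eq_norm]; exact hu)
    have h2 : ‖v - c‖ ≤ ρ := le_of_eq (by rw [← dist_eq_norm]; exact hv)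
    have hne : u - c ≠ v - c := fun h => huv (by
      have := congrArg (· + c) h; simpa using this)
    have hlt := norm_combo_lt_of_ne h1 h2 hne ha0 hb0 hab
    have : a • (u - c) + b • (v - c) = (a • u + b • v) - (a + b) • c := by
      module
    rw [hab, one_smul, habw] at this
    rw [this, ← dist_eq_norm, hw] at hlt
    exact lt_irrefl _ hlt

theorem cos_lt_half {x : ℝ} (h1 : π/3 < x) (h2 : x < 5*π/3) : Real.cos x < 1/2 := by
  have hπ := Real.pi_pos
  rcases le_or_gt x π with h | h
  · calc Real.cos x < Real.cos (π/3) :=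
        cos_lt_cos_of_nonneg_of_le_pi (by positivity) h h1
      _ = 1/2 := Real.cos_pi_div_three
  · rw [← Real.cos_two_pi_sub]
    calc Real.cos (2*π - x) < Real.cos (π/3) :=
        cos_lt_cos_of_nonneg_of_le_pi (by positivity) (by linarith) (by linarith)
      _ = 1/2 := Real.cos_pi_div_three

theorem polygon_complex (n k : ℕ) (h3 : 3 ≤ n) (hk : Nat.Coprime k n)
    (hlo : n < 6*k) (hhi : 6*k < 5*n) :
    ∃ (r : ℝ) (g : Fin n → ℂ), 0 < r ∧ r < 1 ∧ Function.Injective g ∧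
      (∀ ⦃u v⦄, (SimpleGraph.cycleGraph n).Adj u v → dist (g u) (g v) = 1) ∧
      (∀ v, dist (g v) 0 = r) := by
  haveI : NeZero n := ⟨by omega⟩
  have hπ := Real.pi_pos
  have hn0 : (0:ℝ) < n := by positivity
  set θ : ℝ := 2*π*k/n with hθdef
  have hθ1 : π/3 < θ := by
    rw [hθdef, lt_div_iff₀ hn0]
    have : (n:ℝ) < 6*k := by exact_mod_cast hlo
    nlinarith
  have hθ2 : θ < 5*π/3 := by
    rw [hθdef, div_lt_iff₀ hn0]
    have : (6*k:ℝ) < 5*n := by exact_mod_cast hhi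
    nlinarith
  set ω : ℂ := Complex.exp (θ * Complex.I) with hωdef
  have habsω : ‖ω‖ = 1 := Complex.norm_exp_ofReal_mul_I θ
  have hω0 : ω ≠ 0 := Complex.exp_ne_zero _
  have hnC : (n:ℂ) ≠ 0 := by exact_mod_cast hn0.ne'
  have hωn : ω ^ n = 1 := by
    rw [hωdef, ← Complex.exp_nat_mul, Complex.exp_eq_one_iff]
    refine ⟨k, ?_⟩
    rw [hθdef]
    push_cast
    field_simp
  have hmod : ∀ m : ℕ, ω ^ (m % n) = ω ^ m := by
    intro m
    conv_rhs => rw [← Nat.div_add_mod m n]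
    rw [pow_add, pow_mul, hωn, one_pow, one_mul]
  have hroot : ∀ d : ℕ, d < n → ω ^ d = 1 → d = 0 := by
    intro d hd hωd
    rw [hωdef, ← Complex.exp_nat_mul, Complex.exp_eq_one_iff] at hωd
    obtain ⟨m, hm⟩ := hωd
    have h2 : (((d:ℝ)*θ : ℝ) : ℂ) * Complex.I = (((m:ℝ)*(2*π) : ℝ) : ℂ) * Complex.I := by
      push_cast
      linear_combination hm
    have h3 := mul_right_cancel₀ Complex.I_ne_zero h2
    have hre : (d:ℝ) * θ = (m:ℝ) * (2*π) := by exact_mod_cast h3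
    have hint : (d:ℤ) * k = m * n := by
      have hre2 : (d:ℝ) * (2*π*k) = (m:ℝ) * (2*π) * n := by
        rw [hθdef] at hre
        field_simp at hre
        linear_combination (2*π) * hre
      have : (d:ℝ) * k = (m:ℝ) * n := by nlinarith [hπ]
      exact_mod_cast this
    have hdvd : (n:ℤ) ∣ (d:ℤ) * (k:ℤ) := ⟨m, by linarith [hint]⟩
    have hdvd' : n ∣ d * k := by exact_mod_cast hdvd
    exact Nat.eq_zero_of_dvd_of_lt ((Nat.Coprime.dvd_of_dvd_mul_right hk.symm) hdvd') hd
  set d : ℝ := ‖ω - 1‖ with hddef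
  have hd2 : d^2 = 2 - 2*Real.cos θ := by
    rw [hddef, Complex.sq_norm, Complex.normSq_apply]
    simp only [hωdef, Complex.sub_re, Complex.sub_im, Complex.one_re, Complex.one_im,
      Complex.exp_ofReal_mul_I_re, Complex.exp_ofReal_mul_I_im]
    nlinarith [Real.sin_sq_add_cos_sq θ]
  have hcos : Real.cos θ < 1/2 := cos_lt_half hθ1 hθ2
  have hd1 : 1 < d := by nlinarith [norm_nonneg (ω - 1), sq_nonneg (d-1), sq_nonneg (d+1)]
  have hd0 : (0:ℝ) < d := by linarith
  refine ⟨1/d, fun j => ((1/d : ℝ) : ℂ) * ω ^ (j : ℕ), by positivity, by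
    rw [div_lt_one hd0]; exact hd1, ?_, ?_, ?_⟩
  · -- injective
    intro i j hij
    have hr0 : ((1/d:ℝ):ℂ) ≠ 0 := by
      simp only [ne_eq, Complex.ofReal_eq_zero]
      positivity
    have hpow : ω ^ (i:ℕ) = ω ^ (j:ℕ) := mul_left_cancel₀ hr0 hij
    rcases le_total (j:ℕ) (i:ℕ) with h | h
    · have : ω ^ ((j:ℕ) + ((i:ℕ) - (j:ℕ))) = ω ^ (j:ℕ) * 1 := by
        rw [Nat.add_sub_cancel' h, hpow, mul_one]
      rw [pow_add] at this
      have := mul_left_cancel₀ (pow_ne_zero _ hω0) this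
      have := hroot _ (by omega) this
      exact Fin.ext (by omega)
    · have : ω ^ ((i:ℕ) + ((j:ℕ) - (i:ℕ))) = ω ^ (i:ℕ) * 1 := by
        rw [Nat.add_sub_cancel' h, ← hpow, mul_one]
      rw [pow_add] at this
      have := mul_left_cancel₀ (pow_ne_zero _ hω0) this
      have := hroot _ (by omega) this
      exact Fin.ext (by omega)
  · -- distances
    have key : ∀ u : Fin n, dist (((1/d:ℝ):ℂ) * ω ^ (u:ℕ)) (((1/d:ℝ):ℂ) * ω ^ ((u+1 : Fin n):ℕ)) = 1 := by
      intro u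
      have hval : ((u + 1 : Fin n) : ℕ) = ((u:ℕ) + 1) % n := by
        simp only [Fin.add_def, Fin.val_one']
        rw [Nat.mod_eq_of_lt (show 1 < n by omega)]
      rw [Complex.dist_eq, hval, hmod]
      have : ((1/d:ℝ):ℂ) * ω ^ (u:ℕ) - ((1/d:ℝ):ℂ) * ω ^ ((u:ℕ)+1)
          = ((1/d:ℝ):ℂ) * ω ^ (u:ℕ) * (1 - ω) := by ring
      rw [this]
      rw [norm_mul, norm_mul, Complex.norm_real, Real.norm_eq_abs, norm_pow, habsω, one_pow, mul_one]
      have : ‖1 - ω‖ = d := by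
        rw [hddef, ← norm_neg]; congr 1; ring
      rw [this, abs_of_pos (by positivity)]
      field_simp
    intro u v huv
    rw [SimpleGraph.cycleGraph_adj'] at huv
    have hone : ((1 : Fin n) : ℕ) = 1 := by
      simp only [Fin.val_one']
      exact Nat.mod_eq_of_lt (by omega)
    rcases huv with h | h
    · have h1 : u - v = 1 := Fin.ext (by rw [h, hone])
      have h2 : u = v + 1 := by
        have := eq_add_of_sub_eq h1
        rwa [add_comm] at this
      rw [h2, dist_comm]
      exact key v
    · have h1 : v - u = 1 := Fin.ext (by rw [h, hone])
      have h2 : v = u + 1 := by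
        have := eq_add_of_sub_eq h1
        rwa [add_comm] at this
      rw [h2]
      exact key u
  · intro v
    rw [Complex.dist_eq, sub_zero]
    dsimp only
    rw [norm_mul, Complex.norm_real, Real.norm_eq_abs, norm_pow, habsω,
      one_pow, mul_one, abs_of_pos (by positivity)]

theorem not_low {n m : ℕ} (h3 : 3 ≤ n) (hm : m ≤ 1) :
    ¬ HasSphericalEmbedding (SimpleGraph.cycleGraph n) m := by
  rintro ⟨r, hr0, hr1, f, ⟨hinj, -, -⟩, c, hsph⟩
  set v0 : Fin n := ⟨0, by omega⟩
  set v1 : Fin n := ⟨1, by omega⟩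
  set v2 : Fin n := ⟨2, by omega⟩
  have d01 : v0 ≠ v1 := by simp [v0, v1, Fin.ext_iff]
  have d02 : v0 ≠ v2 := by simp [v0, v2, Fin.ext_iff]
  have d12 : v1 ≠ v2 := by simp [v1, v2, Fin.ext_iff]
  interval_cases m
  · exact d01 (hinj (Subsingleton.elim _ _))
  · have key : ∀ v : Fin n, f v 0 = c 0 + r ∨ f v 0 = c 0 - r := by
      intro v
      have h := hsph v
      rw [EuclideanSpace.dist_eq, Fin.sum_univ_one, Real.sqrt_sq dist_nonneg,
        Real.dist_eq] at h
      rcases abs_eq (le_of_lt hr0) |>.mp h with h | h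
      · left; linarith
      · right; linarith
    have coordinj : ∀ u v : Fin n, f u 0 = f v 0 → u = v := by
      intro u v h
      apply hinj
      ext i
      have : i = 0 := Subsingleton.elim _ _
      rw [this]; exact h
    rcases key v0 with h0 | h0 <;> rcases key v1 with h1 | h1 <;>
      rcases key v2 with h2 | h2 <;>
    first
      | exact d01 (coordinj _ _ (h0.trans h1.symm))
      | exact d02 (coordinj _ _ (h0.trans h2.symm))
      | exact d12 (coordinj _ _ (h1.trans h2.symm))

theorem cop2 (s : ℕ) : Nat.Coprime 2 (2*s+1) := by
  simpa using (Nat.coprime_mul_left_add_right 2 1 s).mpr (Nat.coprime_one_right 2)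

theorem cops (s : ℕ) : Nat.Coprime s (2*s+1) := by
  simpa [mul_comm] using (Nat.coprime_mul_left_add_right s 1 2).mpr (Nat.coprime_one_right s)

theorem exists_good_k (n : ℕ) (h3 : 3 ≤ n) (h6 : n ≠ 6) :
    ∃ k, Nat.Coprime k n ∧ n < 6*k ∧ 6*k < 5*n := by
  rcases Nat.even_or_odd n with he | ho
  · obtain ⟨m, hm⟩ := he
    rcases Nat.even_or_odd m with hme | hmo
    · -- n = 4s
      obtain ⟨s, hs⟩ := hme
      have hs1 : 1 ≤ s := by omega
      refine ⟨2*s+1, ?_, by omega, by omega⟩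
      have h4 : n = 4*s := by omega
      rw [h4]
      have c2 : Nat.Coprime (2*s+1) 4 := by
        have := ((cop2 s).symm.pow_right 2)
        simpa [pow_two] using this
      have cs : Nat.Coprime (2*s+1) s := (cops s).symm
      have : Nat.Coprime (2*s+1) (4*s) := c2.mul_right cs
      exact this
    · -- n = 2m, m odd: n = 2(2s+1), s ≥ 2
      obtain ⟨s, hss⟩ := hmo
      have hs2 : 2 ≤ s := by omega
      refine ⟨2*s+3, ?_, by omega, by omega⟩
      have h4 : n = 2*(2*s+1) := by omega
      rw [h4]
      have c2 : Nat.Coprime (2*s+3) 2 := by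
        have := (cop2 (s+1)).symm
        have h23 : 2*(s+1)+1 = 2*s+3 := by ring
        rwa [h23] at this
      have cs : Nat.Coprime (2*s+3) (2*s+1) := by
        have : Nat.Coprime (2*s+1) ((2*s+1)*1 + 2) :=
          (Nat.coprime_mul_left_add_right (2*s+1) 2 1).mpr (cop2 s).symm
        have h23 : (2*s+1)*1 + 2 = 2*s+3 := by ring
        rw [h23] at this
        exact this.symm
      exact c2.mul_right cs
  · -- n odd, n = 2t+1
    obtain ⟨t, ht⟩ := ho
    have ht1 : 1 ≤ t := by omega
    exact ⟨t, by rw [ht]; exact cops t, by omega, by omega⟩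

noncomputable def hexb : ℝ := Real.sqrt 2 / 2

theorem hexb_sq : hexb^2 = 1/2 := by
  rw [hexb, div_pow, Real.sq_sqrt (by norm_num : (2:ℝ) ≥ 0)]
  norm_num

theorem hexb_pos : 0 < hexb := by
  rw [hexb]; positivity

noncomputable def hexM : Fin 6 → Fin 3 → ℝ := fun j i =>
  (if (j:ℕ) = (i:ℕ) then hexb else 0) + (if (j:ℕ) = (i:ℕ) + 3 then -hexb else 0)

noncomputable def hexf : Fin 6 → EuclideanSpace ℝ (Fin 3) := fun j => WithLp.toLp 2 (fun i => hexM j i)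

theorem hex_sphere : ∀ v, dist (hexf v) (0 : EuclideanSpace ℝ (Fin 3)) = hexb := by
  intro v
  rw [EuclideanSpace.dist_eq]
  fin_cases v <;>
    · norm_num +decide [hexf, hexM, Fin.sum_univ_three, Real.dist_eq]
      first
        | exact Real.sqrt_sq hexb_pos.le
        | (rw [abs_neg, abs_of_pos hexb_pos, ← Real.sqrt_sq hexb_pos.le]; norm_num)

theorem hex_inj : Function.Injective hexf := by
  intro x y h
  have h0 := congrArg (fun p => p 0) h
  have h1 := congrArg (fun p => p 1) h
  have h2 := congrArg (fun p => p 2) h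
  have hb := hexb_pos
  fin_cases x <;> fin_cases y <;>
    first
      | rfl
      | (exfalso; norm_num [hexf, hexM] at h0 h1 h2; linarith)

theorem hex_dist : ∀ ⦃u v⦄, (SimpleGraph.cycleGraph 6).Adj u v →
    dist (hexf u) (hexf v) = 1 := by
  intro u v huv
  rw [SimpleGraph.cycleGraph_adj'] at huv
  rw [EuclideanSpace.dist_eq]
  fin_cases u <;> fin_cases v <;>
    first
      | (exfalso; revert huv; decide)
      | (norm_num +decide [hexf, hexM, Fin.sum_univ_three, Real.dist_eq, sq_abs]
         first
           | nlinarith [hexb_sq]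
           | (rw [Real.sqrt_eq_one]; nlinarith [hexb_sq]))

theorem pigeon (S : ℕ → ℤ) (d : ℕ) (hd : 0 < d) (hlt : d < 6) :
    ∃ i j : ℕ, i ≤ 5 ∧ j ≤ 5 ∧ i ≠ j ∧ (d:ℤ) ∣ (S i - S j) := by
  haveI : NeZero d := ⟨hd.ne'⟩
  obtain ⟨x, y, hxy, hf⟩ := Fintype.exists_ne_map_eq_of_card_lt
    (fun i : Fin 6 => ((S i.val : ℤ) : ZMod d)) (by rw [ZMod.card]; simp; omega)
  refine ⟨x.val, y.val, by omega, by omega, fun h => hxy (Fin.ext h), ?_⟩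
  have : ((S x.val - S y.val : ℤ) : ZMod d) = 0 := by push_cast; rw [hf]; ring
  exact (ZMod.intCast_zmod_eq_zero_iff_dvd _ d).mp this

theorem c6_alg (a : ℂ) (t s : ℝ) (hare : a.re = t) (haim : a.im = s)
    (hs2 : s^2 = 1-t^2) (ht : t < 1/2) (h2 : a^(2:ℕ) ≠ 1) (h3 : a^(3:ℕ) ≠ 1) :
    a^(6:ℕ) ≠ 1 := by
  intro h
  have hc : (a^(3:ℕ) - 1) * (a^(3:ℕ) + 1) = 0 := by
    rw [show (a^(3:ℕ) - 1) * (a^(3:ℕ) + 1) = a^(6:ℕ) - 1 by ring, h, sub_self]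
  rcases mul_eq_zero.mp hc with hc | hc
  · exact h3 (by rwa [sub_eq_zero] at hc)
  · have hc3 : a^(3:ℕ) = -1 := by rwa [add_eq_zero_iff_eq_neg] at hc
    have hre3 : (a^(3:ℕ)).re = -1 := by rw [hc3]; simp
    have hre3' : (a^(3:ℕ)).re = t^3 - 3*t*s^2 := by
      rw [pow_succ, pow_succ, pow_one]
      simp only [Complex.mul_re, Complex.mul_im, hare, haim]
      ring
    have heq : t^3 - 3*t*s^2 = -1 := by rw [← hre3', hre3]
    have hquad : (t+1)*(2*t-1)^2 = 0 := by linear_combination heq + 3*t*hs2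
    rcases mul_eq_zero.mp hquad with hq | hq
    · have htm1 : t = -1 := by linarith
      have hsq : s^2 = 0 := by rw [hs2, htm1]; ring
      have hs0 : s = 0 := pow_eq_zero_iff (by norm_num) |>.mp hsq
      have ham1 : a = -1 := by
        apply Complex.ext
        · rw [hare, htm1]; simp
        · rw [haim, hs0]; simp
      exact h2 (by rw [ham1]; ring)
    · have h21 : (2*t-1) = 0 := sq_eq_zero_iff.mp hq
      linarith

theorem c6_core (u : Fin 6 → ℂ) (r : ℝ) (hr0 : 0 < r) (hr1 : r < 1)
    (hinj : Function.Injective u) (hsph : ∀ j, ‖u j‖ = r)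
    (hdist : ∀ j : Fin 6, ‖u (j+1) - u j‖ = 1) : False := by
  have hr2 : (0:ℝ) < r^2 := by positivity
  have hu0 : ∀ j, u j ≠ 0 := fun j h => by
    have := hsph j; rw [h] at this; simp at this; linarith
  -- real part of products
  have hre : ∀ j : Fin 6, (u (j+1) * (starRingEnd ℂ) (u j)).re = r^2 - 1/2 := by
    intro j
    have h1 : Complex.normSq (u (j+1) - u j) = 1 := by
      rw [← Complex.sq_norm, hdist j]; norm_num
    rw [Complex.normSq_sub] at h1
    have h2 : Complex.normSq (u (j+1)) = r^2 := by
      rw [← Complex.sq_norm, hsph]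
    have h3 : Complex.normSq (u j) = r^2 := by
      rw [← Complex.sq_norm, hsph]
    rw [h2, h3] at h1
    linarith
  set t : ℝ := (r^2 - 1/2) / r^2 with htdef
  set q : Fin 6 → ℂ := fun j => ((r^2)⁻¹ : ℝ) * (u (j+1) * (starRingEnd ℂ) (u j)) with hqdef
  have habsq : ∀ j, ‖q j‖ = 1 := by
    intro j
    rw [hqdef]
    simp only [norm_mul, Complex.norm_real, Real.norm_eq_abs, Complex.norm_conj, hsph]
    rw [abs_of_pos (by positivity)]
    field_simp
  have hqre : ∀ j, (q j).re = t := by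
    intro j
    rw [hqdef]
    simp only [Complex.re_ofReal_mul, hre]
    rw [htdef]; ring
  have hstep : ∀ j : Fin 6, u (j+1) = q j * u j := by
    intro j
    rw [hqdef]
    have : (((r^2)⁻¹:ℝ):ℂ) * (u (j+1) * (starRingEnd ℂ) (u j)) * u j
        = (((r^2)⁻¹:ℝ):ℂ) * ((Complex.normSq (u j) : ℝ):ℂ) * u (j+1) := by
      rw [← Complex.mul_conj]
      ring
    rw [this]
    rw [show Complex.normSq (u j) = r^2 by rw [← Complex.sq_norm, hsph]]
    rw [← Complex.ofReal_mul]
    rw [inv_mul_cancel₀ hr2.ne']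
    simp
  have ht : t < 1/2 := by
    rw [htdef, div_lt_iff₀ hr2]
    nlinarith
  have ht2 : t^2 ≤ 1 := by
    have h1 : (q 0).re^2 + (q 0).im^2 = 1 := by
      have := habsq 0
      rw [Complex.norm_def] at this
      have h2 : Complex.normSq (q 0) = 1 := by
        nlinarith [Complex.normSq_nonneg (q 0), Real.sq_sqrt (Complex.normSq_nonneg (q 0))]
      rw [Complex.normSq_apply] at h2
      nlinarith
    nlinarith [sq_nonneg ((q 0).im), hqre 0]
  set s : ℝ := Real.sqrt (1 - t^2) with hsdef
  have hs2 : s^2 = 1 - t^2 := Real.sq_sqrt (by nlinarith)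
  set a : ℂ := (t : ℂ) + (s : ℂ) * Complex.I with hadef
  have hare : a.re = t := by simp [hadef]
  have haim : a.im = s := by simp [hadef]
  have hnorma : Complex.normSq a = 1 := by
    rw [Complex.normSq_apply, hare, haim]; nlinarith
  have habsa : ‖a‖ = 1 := by
    rw [Complex.norm_def, hnorma, Real.sqrt_one]
  have ha0 : a ≠ 0 := by
    intro h; rw [h] at habsa; simp at habsa
  have hconja : a⁻¹ = (starRingEnd ℂ) a := Complex.inv_eq_conj habsa
  have hqa : ∀ j, q j = a ∨ q j = (starRingEnd ℂ) a := by
    intro j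
    have h1 : (q j).re^2 + (q j).im^2 = 1 := by
      have h2 : Complex.normSq (q j) = 1 := by
        rw [← Complex.sq_norm, habsq]; norm_num
      rw [Complex.normSq_apply] at h2; nlinarith
    have him : (q j).im ^ 2 = s ^ 2 := by
      rw [hs2]; have := hqre j; nlinarith
    rcases sq_eq_sq_iff_eq_or_eq_neg.mp him with h | h
    · left; exact Complex.ext (by rw [hqre, hare]) (by rw [h, haim])
    · right; exact Complex.ext (by rw [hqre]; simp [hare])
        (by rw [h]; simp [haim])
  -- the sign sequence
  set ε : ℕ → ℤ := fun i => if q (i : Fin 6) = a then 1 else -1 with hεdef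
  have hε : ∀ i, ε i = 1 ∨ ε i = -1 := fun i => by
    by_cases hqi : q (i : Fin 6) = a <;> simp [hεdef, hqi]
  have hqpow : ∀ i : ℕ, q (i : Fin 6) = a ^ (ε i) := by
    intro i
    by_cases hqi : q (i : Fin 6) = a
    · rw [show ε i = 1 by simp [hεdef, hqi], zpow_one]; exact hqi
    · rw [show ε i = -1 by simp [hεdef, hqi], zpow_neg_one, hconja]
      rcases hqa (i : Fin 6) with h | h
      · exact absurd h hqi
      · rw [h, ← hconja]
  set S : ℕ → ℤ := fun j => ∑ i ∈ Finset.range j, ε i with hSdef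
  have hS : ∀ j : ℕ, u ((j : Fin 6)) = a ^ (S j) * u 0 := by
    intro j
    induction j with
    | zero => simp [hSdef]
    | succ n ih =>
      have hcast : ((n + 1 : ℕ) : Fin 6) = (n : Fin 6) + 1 := by push_cast; ring
      rw [hcast, hstep, hqpow, ih, hSdef]
      simp only []
      rw [Finset.sum_range_succ, ← mul_assoc, ← zpow_add₀ ha0]
      ring_nf
  have hS0 : S 0 = 0 := by simp [hSdef]
  have hSsucc : ∀ j, S (j+1) = S j + ε j := by
    intro j; rw [hSdef]; simp [Finset.sum_range_succ]
  have h6 : a ^ (S 6) = 1 := by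
    have h1 : ((6 : ℕ) : Fin 6) = 0 := by decide
    have h2 := hS 6
    rw [h1] at h2
    have := mul_right_cancel₀ (hu0 0) (h2.symm.trans (one_mul (u 0)).symm)
    exact this
  have key : ∀ i j : ℕ, i ≤ 5 → j ≤ 5 → i ≠ j → a ^ (S i) ≠ a ^ (S j) := by
    intro i j hi hj hij h
    have : u (i : Fin 6) = u (j : Fin 6) := by rw [hS, hS, h]
    have := hinj this
    rw [Fin.ext_iff, Fin.val_natCast, Fin.val_natCast] at this
    omega
  have hdvd_case : ∀ d : ℕ, 0 < d → d < 6 → a ^ (d:ℕ) = 1 → False := by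
    intro d hd hlt had
    obtain ⟨i, j, hi, hj, hij, ⟨m, hm⟩⟩ := pigeon S d hd hlt
    apply key i j hi hj hij
    have : S i = S j + d * m := by omega
    rw [this, zpow_add₀ ha0, zpow_mul, zpow_natCast, had, one_zpow, mul_one]
  -- case analysis
  by_cases h3 : a ^ (3:ℕ) = 1
  · exact hdvd_case 3 (by norm_num) (by norm_num) h3
  by_cases h4 : a ^ (4:ℕ) = 1
  · exact hdvd_case 4 (by norm_num) (by norm_num) h4
  have h2 : a ^ (2:ℕ) ≠ 1 := fun h => h4 (by rw [show (4:ℕ) = 2*2 by norm_num, pow_mul, h, one_pow])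
  have h66 : a ^ (6:ℕ) ≠ 1 := c6_alg a t s hare haim hs2 ht h2 h3
  -- a^(S 6) = 1 with S 6 even, |S 6| ≤ 6 forces S 6 = 0
  have hnotpm : ∀ m : ℕ, a^(m:ℕ) ≠ 1 → S 6 ≠ (m:ℤ) ∧ S 6 ≠ -(m:ℤ) := by
    intro m hm
    constructor <;> intro h <;> rw [h] at h6
    · rw [zpow_natCast] at h6; exact hm h6
    · rw [zpow_neg, zpow_natCast, inv_eq_one] at h6; exact hm h6
  obtain ⟨n2a, n2b⟩ := hnotpm 2 h2
  obtain ⟨n4a, n4b⟩ := hnotpm 4 h4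
  obtain ⟨n6a, n6b⟩ := hnotpm 6 h66
  have q0 : S 1 = S 0 + ε 0 := hSsucc 0
  have q1 : S 2 = S 1 + ε 1 := hSsucc 1
  have q2 : S 3 = S 2 + ε 2 := hSsucc 2
  have q3 : S 4 = S 3 + ε 3 := hSsucc 3
  have q4 : S 5 = S 4 + ε 4 := hSsucc 4
  have q5 : S 6 = S 5 + ε 5 := hSsucc 5
  have hzero : S 6 = 0 := by
    have e0 := hε 0; have e1 := hε 1; have e2 := hε 2
    have e3 := hε 3; have e4 := hε 4; have e5 := hε 5
    push_cast at n2a n2b n4a n4b n6a n6b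
    omega
  have hd2 : ∀ i j : ℕ, i ≤ 5 → j ≤ 5 → i ≠ j → S i ≠ S j :=
    fun i j hi hj hij h => key i j hi hj hij (by rw [h])
  have d01 := hd2 0 1 (by norm_num) (by norm_num) (by norm_num)
  have d02 := hd2 0 2 (by norm_num) (by norm_num) (by norm_num)
  have d03 := hd2 0 3 (by norm_num) (by norm_num) (by norm_num)
  have d04 := hd2 0 4 (by norm_num) (by norm_num) (by norm_num)
  have d05 := hd2 0 5 (by norm_num) (by norm_num) (by norm_num)
  have d12 := hd2 1 2 (by norm_num) (by norm_num) (by norm_num)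
  have d13 := hd2 1 3 (by norm_num) (by norm_num) (by norm_num)
  have d14 := hd2 1 4 (by norm_num) (by norm_num) (by norm_num)
  have d15 := hd2 1 5 (by norm_num) (by norm_num) (by norm_num)
  have d23 := hd2 2 3 (by norm_num) (by norm_num) (by norm_num)
  have d24 := hd2 2 4 (by norm_num) (by norm_num) (by norm_num)
  have d25 := hd2 2 5 (by norm_num) (by norm_num) (by norm_num)
  have d34 := hd2 3 4 (by norm_num) (by norm_num) (by norm_num)
  have d35 := hd2 3 5 (by norm_num) (by norm_num) (by norm_num)
  have d45 := hd2 4 5 (by norm_num) (by norm_num) (by norm_num)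
  have e0 := hε 0; have e1 := hε 1; have e2 := hε 2
  have e3 := hε 3; have e4 := hε 4; have e5 := hε 5
  omega

open SimpleGraph in
theorem hasSph_of_points {V : Type*} (G : SimpleGraph V) {n : ℕ}
    (f : V → EuclideanSpace ℝ (Fin n)) (c : EuclideanSpace ℝ (Fin n)) (r : ℝ)
    (hinj : Function.Injective f)
    (hdist : ∀ ⦃u v⦄, G.Adj u v → dist (f u) (f v) = 1)
    (hsph : ∀ v, dist (f v) c = r) : HasSphericalEmbeddingRadius G n r :=
  ⟨f, ⟨hinj, hdist, fun u v huv w hwu hwv =>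
    seg_free (hsph u) (hsph v) (hsph w) (hinj.ne huv.ne) (hinj.ne hwu) (hinj.ne hwv)⟩,
    c, hsph⟩

theorem cyc_mem2 (n : ℕ) (h3 : 3 ≤ n) (h6 : n ≠ 6) :
    HasSphericalEmbedding (SimpleGraph.cycleGraph n) 2 := by
  obtain ⟨k, hk, hlo, hhi⟩ := exists_good_k n h3 h6
  obtain ⟨r, g, hr0, hr1, hinj, hdist, hsph⟩ := polygon_complex n k h3 hk hlo hhi
  set e := Complex.orthonormalBasisOneI.repr with hedef
  refine ⟨r, hr0, hr1, hasSph_of_points _ (fun v => e (g v)) (e 0) r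
    (e.injective.comp hinj) (fun u v huv => ?_) (fun v => ?_)⟩
  · rw [e.dist_map]; exact hdist huv
  · rw [e.dist_map]; exact hsph v

theorem hexb_lt_one : hexb < 1 := by
  nlinarith [hexb_sq, hexb_pos]

theorem c6_mem3 : HasSphericalEmbedding (SimpleGraph.cycleGraph 6) 3 :=
  ⟨hexb, hexb_pos, hexb_lt_one,
    hasSph_of_points _ hexf 0 hexb hex_inj hex_dist hex_sphere⟩

theorem c6_not2 : ¬ HasSphericalEmbedding (SimpleGraph.cycleGraph 6) 2 := by
  rintro ⟨r, hr0, hr1, f, ⟨hinj, hdistadj, -⟩, c, hsph⟩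
  set e := Complex.orthonormalBasisOneI.repr with hedef
  set g : Fin 6 → ℂ := fun j => e.symm (f j) - e.symm c with hgdef
  have hadj : ∀ j : Fin 6, (SimpleGraph.cycleGraph 6).Adj j (j+1) := by
    intro j
    rw [SimpleGraph.cycleGraph_adj']
    right
    rw [add_sub_cancel_left]
    rfl
  apply c6_core g r hr0 hr1
  · intro x y hxy
    have : e.symm (f x) = e.symm (f y) := by
      have := sub_left_injective hxy
      exact this
    exact hinj (e.symm.injective this)
  · intro j
    rw [hgdef]
    simp only [sub_sub_sub_cancel_right]
    rw [← Complex.dist_eq, e.symm.dist_map]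
    exact hsph j
  · intro j
    rw [hgdef]
    simp only []
    rw [show (e.symm (f (j+1)) - e.symm c) - (e.symm (f j) - e.symm c)
        = e.symm (f (j+1)) - e.symm (f j) by ring]
    rw [← Complex.dist_eq, e.symm.dist_map, dist_comm]
    exact hdistadj (hadj j)

end SDimHelpers

/-- For every `n ≥ 3` with `n ≠ 6`, the cycle `Cₙ` has spherical dimension 2,
while `C₆` has spherical dimension 3. -/
theorem stmt10 :
    (∀ n : ℕ, 3 ≤ n → n ≠ 6 → sphericalDim (SimpleGraph.cycleGraph n) = 2) ∧
    sphericalDim (SimpleGraph.cycleGraph 6) = 3 := by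
  have hcond : ∀ n : ℕ, 3 ≤ n → ¬ (Fintype.card (Fin n) ≤ 1) := by
    intro n h3
    rw [Fintype.card_fin]
    omega
  constructor
  · intro n h3 h6
    rw [sphericalDim, if_neg (hcond n h3)]
    have hmem : (2:ℕ) ∈ {m | HasSphericalEmbedding (SimpleGraph.cycleGraph n) m} :=
      cyc_mem2 n h3 h6
    apply le_antisymm
    · exact Nat.sInf_le hmem
    · apply le_csInf ⟨2, hmem⟩
      intro m hm
      by_contra hlt
      push_neg at hlt
      interval_cases m <;> exact not_low h3 (by norm_num) hm
  · rw [sphericalDim, if_neg (hcond 6 (by norm_num))]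
    apply le_antisymm
    · exact Nat.sInf_le (show (3:ℕ) ∈ {m | HasSphericalEmbedding (SimpleGraph.cycleGraph 6) m} from c6_mem3)
    · apply le_csInf ⟨3, (show (3:ℕ) ∈ {m | HasSphericalEmbedding (SimpleGraph.cycleGraph 6) m} from c6_mem3)⟩
      intro m hm
      by_contra hlt
      push_neg at hlt
      interval_cases m
      · exact not_low (by norm_num) (by norm_num) hm
      · exact not_low (by norm_num) (by norm_num) hm
      · exact c6_not2 hm
end

section
/- Let X be a finite subset of ℝ^{n+m} contained in a sphere S = {x ∈ A : ‖x − c‖ = r} with 0 < r < 1, where A is an n-dimensional affine subspace with c ∈ A and the affine hull of X equals A. Let p ∈ ℝ^{n+m} be any point with ‖p − x‖ = 1 for every x ∈ X (such a point exists when m ≥ 1). Then X ∪ {p} is contained in a sphere of radius 1/(2√(1 − r²)) lying in an (n+1)-dimensional affine subspace of ℝ^{n+m}, and this sphere is the unique sphere contained in an (n+1)-dimensional affine subspace that contains X ∪ {p}. -/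
set_option maxHeartbeats 800000


/-- If a finite set `X ⊆ ℝ^{n+m}` lies on the sphere of radius `0 < r < 1`
centered at `c` in an `n`-dimensional affine subspace `A` which is the affine hull of `X`,
and `p` is at distance 1 from every point of `X`, then `X ∪ {p}` lies on a sphere of radius
`1/(2√(1-r²))` in an `(n+1)`-dimensional affine subspace, and this sphere is the unique
sphere in an `(n+1)`-dimensional affine subspace containing `X ∪ {p}`. -/
theorem stmt12 {n m : ℕ} (X : Set (EuclideanSpace ℝ (Fin (n + m)))) (hXfin : X.Finite)
    (A : AffineSubspace ℝ (EuclideanSpace ℝ (Fin (n + m))))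
    (c : EuclideanSpace ℝ (Fin (n + m))) (hc : c ∈ A)
    (hdim : Module.finrank ℝ A.direction = n)
    (r : ℝ) (hr0 : 0 < r) (hr1 : r < 1) (hX : ∀ x ∈ X, x ∈ A ∧ dist x c = r)
    (hspan : affineSpan ℝ X = A)
    (p : EuclideanSpace ℝ (Fin (n + m))) (hp : ∀ x ∈ X, dist p x = 1) :
    ∃ (B : AffineSubspace ℝ (EuclideanSpace ℝ (Fin (n + m))))
      (c' : EuclideanSpace ℝ (Fin (n + m))),
      c' ∈ B ∧ Module.finrank ℝ B.direction = n + 1 ∧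
      (∀ x ∈ X ∪ {p}, x ∈ B ∧ dist x c' = 1 / (2 * Real.sqrt (1 - r ^ 2))) ∧
      ∀ (B' : AffineSubspace ℝ (EuclideanSpace ℝ (Fin (n + m))))
        (c'' : EuclideanSpace ℝ (Fin (n + m))) (ρ : ℝ),
        c'' ∈ B' → Module.finrank ℝ B'.direction = n + 1 →
        (∀ x ∈ X ∪ {p}, x ∈ B' ∧ dist x c'' = ρ) →
        {x | x ∈ B' ∧ dist x c'' = ρ} =
          {x | x ∈ B ∧ dist x c' = 1 / (2 * Real.sqrt (1 - r ^ 2))} := by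
    classical
  have hs : (0:ℝ) < 1 - r ^ 2 := by nlinarith
  have hsqrt : (0:ℝ) < Real.sqrt (1 - r ^ 2) := Real.sqrt_pos.mpr hs
  set R : ℝ := 1 / (2 * Real.sqrt (1 - r ^ 2)) with hR_def
  have hRpos : 0 < R := by positivity
  have hR2 : R ^ 2 = 1 / (4 * (1 - r ^ 2)) := by
    rw [hR_def, div_pow, mul_pow, Real.sq_sqrt hs.le]; norm_num
  -- X is nonempty
  have hXne : X.Nonempty := by
    rcases X.eq_empty_or_nonempty with h | h
    · exfalso
      rw [h, AffineSubspace.span_empty] at hspan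
      rw [← hspan] at hc
      exact AffineSubspace.notMem_bot _ _ c hc
    · exact h
  obtain ⟨x₀, hx₀⟩ := hXne
  have hx₀A : x₀ ∈ A := (hX x₀ hx₀).1
  -- key computation for equidistant points
  have key : ∀ q : EuclideanSpace ℝ (Fin (n + m)), ∀ ρ : ℝ, (∀ x ∈ X, dist q x = ρ) →
      ∀ x ∈ X, 2 * (inner ℝ (q - c) (x - c) : ℝ) = ‖q - c‖ ^ 2 + r ^ 2 - ρ ^ 2 := by
    intro q ρ hq x hx
    have h1 : ‖q - x‖ = ρ := by rw [← dist_eq_norm]; exact hq x hx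
    have h2 : ‖x - c‖ = r := by rw [← dist_eq_norm]; exact (hX x hx).2
    have h3 : ‖(q - c) - (x - c)‖ ^ 2
        = ‖q - c‖ ^ 2 - 2 * (inner ℝ (q - c) (x - c) : ℝ) + ‖x - c‖ ^ 2 :=
      norm_sub_sq_real _ _
    have h4 : (q - c) - (x - c) = q - x := by abel
    rw [h4, h1, h2] at h3
    linarith
  have hAdir : A.direction = vectorSpan ℝ X := by rw [← hspan, direction_affineSpan]
  -- orthogonality of q - c to A.direction for equidistant q
  have orth : ∀ q : EuclideanSpace ℝ (Fin (n + m)), ∀ ρ : ℝ, (∀ x ∈ X, dist q x = ρ) →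
      ∀ w ∈ A.direction, (inner ℝ (q - c) w : ℝ) = 0 := by
    intro q ρ hq
    have hle : vectorSpan ℝ X ≤ LinearMap.ker (innerSL ℝ (q - c)).toLinearMap := by
      rw [vectorSpan_def]
      apply Submodule.span_le.mpr
      rintro u hu
      rcases Set.mem_vsub.mp hu with ⟨x, hx, y, hy, rfl⟩
      have hx' := key q ρ hq x hx
      have hy' := key q ρ hq y hy
      simp only [SetLike.mem_coe, LinearMap.mem_ker, ContinuousLinearMap.coe_coe, innerSL_apply_apply]
      have h5 : x -ᵥ y = (x - c) - (y - c) := by rw [vsub_eq_sub]; abel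
      rw [h5, inner_sub_right]
      linarith
    intro w hw
    have h6 := hle (hAdir ▸ hw)
    rwa [LinearMap.mem_ker, ContinuousLinearMap.coe_coe, innerSL_apply_apply] at h6
  have hporth : ∀ w ∈ A.direction, (inner ℝ (p - c) w : ℝ) = 0 := orth p 1 hp
  have hx₀dir : x₀ - c ∈ A.direction := by
    have := AffineSubspace.vsub_mem_direction hx₀A hc
    simpa [vsub_eq_sub] using this
  have hpnorm : ‖p - c‖ ^ 2 = 1 - r ^ 2 := by
    have h1 := key p 1 hp x₀ hx₀
    rw [hporth (x₀ - c) hx₀dir] at h1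
    linarith
  have hpc0 : p - c ≠ 0 := by
    intro h
    rw [h] at hpnorm
    simp at hpnorm
    nlinarith
  -- the subspace B
  set B : AffineSubspace ℝ (EuclideanSpace ℝ (Fin (n + m))) := A ⊔ affineSpan ℝ {p}
    with hB_def
  have hpspan : p ∈ affineSpan ℝ ({p} : Set (EuclideanSpace ℝ (Fin (n + m)))) :=
    mem_affineSpan ℝ (Set.mem_singleton p)
  have hAB : A ≤ B := le_sup_left
  have hpB : p ∈ B := (le_sup_right : affineSpan ℝ {p} ≤ B) hpspan
  have hcB : c ∈ B := hAB hc
  have hBdir : B.direction = A.direction ⊔ Submodule.span ℝ {p - c} := by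
    rw [hB_def, AffineSubspace.direction_sup hc hpspan, direction_affineSpan,
      vectorSpan_singleton]
    simp [vsub_eq_sub]
  have hinf : A.direction ⊓ Submodule.span ℝ {p - c} = ⊥ := by
    rw [eq_bot_iff]
    intro w hw
    obtain ⟨hw1, hw2⟩ := Submodule.mem_inf.mp hw
    rcases Submodule.mem_span_singleton.mp hw2 with ⟨a, rfl⟩
    have h7 := hporth _ hw1
    rw [real_inner_smul_right, real_inner_self_eq_norm_sq, hpnorm] at h7
    have ha : a = 0 := by
      rcases mul_eq_zero.mp h7 with h | h
      · exact h
      · exfalso; nlinarith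
    simp [ha]
  have hBrank : Module.finrank ℝ B.direction = n + 1 := by
    rw [hBdir]
    have h1 := Submodule.finrank_sup_add_finrank_inf_eq A.direction
      (Submodule.span ℝ {p - c})
    rw [hinf, finrank_span_singleton hpc0, hdim, finrank_bot] at h1
    omega
  -- center
  set t : ℝ := (1 - 2 * r ^ 2) / (2 * (1 - r ^ 2)) with ht_def
  set c' : EuclideanSpace ℝ (Fin (n + m)) := c + t • (p - c) with hc'_def
  have hc'B : c' ∈ B := by
    have := B.smul_vsub_vadd_mem t hpB hcB hcB
    have h8 : t • (p -ᵥ c) +ᵥ c = c' := by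
      rw [vsub_eq_sub, vadd_eq_add, hc'_def]; abel
    rwa [h8] at this
  -- distance formulas
  have hdistX : ∀ τ : ℝ, ∀ x ∈ X, dist x (c + τ • (p - c)) ^ 2
      = r ^ 2 + τ ^ 2 * (1 - r ^ 2) := by
    intro τ x hx
    have h2 : ‖x - c‖ = r := by rw [← dist_eq_norm]; exact (hX x hx).2
    have hxdir : x - c ∈ A.direction := by
      have := AffineSubspace.vsub_mem_direction (hX x hx).1 hc
      simpa [vsub_eq_sub] using this
    have horth : (inner ℝ (x - c) (τ • (p - c)) : ℝ) = 0 := by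
      rw [real_inner_smul_right, real_inner_comm, hporth _ hxdir, mul_zero]
    have h4 : x - (c + τ • (p - c)) = (x - c) - τ • (p - c) := by abel
    rw [dist_eq_norm, h4, norm_sub_sq_real, horth, h2, norm_smul,
      Real.norm_eq_abs, mul_pow, sq_abs, hpnorm]
    ring
  have hdistp : ∀ τ : ℝ, dist p (c + τ • (p - c)) ^ 2 = (1 - τ) ^ 2 * (1 - r ^ 2) := by
    intro τ
    have h4 : p - (c + τ • (p - c)) = (1 - τ) • (p - c) := by
      rw [sub_smul, one_smul]; abel
    rw [dist_eq_norm, h4, norm_smul, Real.norm_eq_abs, mul_pow, sq_abs, hpnorm]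
  have hts : r ^ 2 + t ^ 2 * (1 - r ^ 2) = 1 / (4 * (1 - r ^ 2)) := by
    rw [ht_def]; field_simp; ring
  have htp : (1 - t) ^ 2 * (1 - r ^ 2) = 1 / (4 * (1 - r ^ 2)) := by
    rw [ht_def]; field_simp; ring
  have sq_eq : ∀ d : ℝ, 0 ≤ d → d ^ 2 = R ^ 2 → d = R := by
    intro d hd h
    calc d = Real.sqrt (d ^ 2) := (Real.sqrt_sq hd).symm
    _ = Real.sqrt (R ^ 2) := by rw [h]
    _ = R := Real.sqrt_sq hRpos.le
  refine ⟨B, c', hc'B, hBrank, ?_, ?_⟩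
  · rintro x (hx | rfl)
    · refine ⟨hAB (hX x hx).1, sq_eq _ dist_nonneg ?_⟩
      rw [hc'_def, hdistX t x hx, hR2, hts]
    · refine ⟨hpB, sq_eq _ dist_nonneg ?_⟩
      rw [hc'_def, hdistp t, hR2, htp]
  · intro B' c'' ρ hc''B' hrank' hall
    have hXB' : ∀ x ∈ X, x ∈ B' := fun x hx => (hall x (Or.inl hx)).1
    have hpB' : p ∈ B' := (hall p (Or.inr rfl)).1
    have hBB' : B ≤ B' := by
      rw [hB_def]
      apply sup_le
      · rw [← hspan]
        exact affineSpan_le.mpr fun x hx => hXB' x hx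
      · exact affineSpan_le.mpr (by simpa using hpB')
    have hdireq : B.direction = B'.direction :=
      Submodule.eq_of_le_of_finrank_eq (AffineSubspace.direction_le hBB')
        (by rw [hBrank, hrank'])
    have hBeq : B = B' := AffineSubspace.ext_of_direction_eq hdireq ⟨c, hcB, hBB' hcB⟩
    have hc''B : c'' ∈ B := hBeq ▸ hc''B'
    have hc''dir : c'' - c ∈ B.direction := by
      have := AffineSubspace.vsub_mem_direction hc''B hcB
      simpa [vsub_eq_sub] using this
    rw [hBdir] at hc''dir
    rcases Submodule.mem_sup.mp hc''dir with ⟨a, ha, b, hb, hab⟩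
    rcases Submodule.mem_span_singleton.mp hb with ⟨τ, rfl⟩
    have hqd : ∀ x ∈ X, dist c'' x = ρ := fun x hx => by
      rw [dist_comm]; exact (hall x (Or.inl hx)).2
    have ha0 : a = 0 := by
      have h1 : (inner ℝ (c'' - c) a : ℝ) = 0 := orth c'' ρ hqd a ha
      have h2 : (inner ℝ (p - c) a : ℝ) = 0 := hporth a ha
      have h3 : (inner ℝ a a : ℝ) = 0 := by
        have h9 : a = (c'' - c) - τ • (p - c) := by rw [← hab]; abel
        calc (inner ℝ a a : ℝ) = inner ℝ ((c'' - c) - τ • (p - c)) a := by rw [← h9]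
        _ = (inner ℝ (c'' - c) a : ℝ) - τ * inner ℝ (p - c) a := by
            rw [inner_sub_left, real_inner_smul_left]
        _ = 0 := by rw [h1, h2]; ring
      exact inner_self_eq_zero.mp h3
    have hc''form : c'' = c + τ • (p - c) := by
      rw [ha0, zero_add] at hab
      rw [hab]; abel
    have hρ1 : ρ ^ 2 = r ^ 2 + τ ^ 2 * (1 - r ^ 2) := by
      have h := hdistX τ x₀ hx₀
      rw [← hc''form] at h
      rw [← (hall x₀ (Or.inl hx₀)).2, h]
    have hρ2 : ρ ^ 2 = (1 - τ) ^ 2 * (1 - r ^ 2) := by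
      have h := hdistp τ
      rw [← hc''form] at h
      rw [← (hall p (Or.inr rfl)).2, h]
    have hτ : τ = t := by
      have h10 : r ^ 2 + τ ^ 2 * (1 - r ^ 2) = (1 - τ) ^ 2 * (1 - r ^ 2) := by
        linarith
      rw [ht_def]
      field_simp
      nlinarith [h10]
    have hρR : ρ = R := by
      have hρnn : 0 ≤ ρ := by
        rw [← (hall p (Or.inr rfl)).2]; exact dist_nonneg
      refine sq_eq ρ hρnn ?_
      rw [hρ1, hτ, hR2, hts]
    rw [← hBeq, hc''form, hτ, hρR, ← hc'_def]
end
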